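/- arXiv:2109.00528 — 6 statements merged into one kernel-verified Lean document; each statement's English description precedes it below -/
import Mathlib

section
/- Let Ω ⊂ ℝ^d be bounded and let f, g be probability density functions on Ω with f, g ∈ L^∞(Ω). Define σ(z) = ∫₀¹ ∫_Ω f((z−ty)/(1−t)) g(y) (1−t)^{−d} dy dt (extending f, g by zero outside Ω). Then σ ∈ L^∞(Ω), with ‖σ‖_∞ ≤ C(‖f‖_∞ + ‖g‖_∞) for some constant C depending only on d. -/
open MeasureTheory Set

/-- Auxiliary: integral of a translated-and-scaled nonnegative integrable function. -/
lemma aux_comp_integral {d : ℕ} (f : EuclideanSpace ℝ (Fin d) → ℝ)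
    (c : EuclideanSpace ℝ (Fin d)) {a : ℝ} (ha : 0 < a) :
    ∫ y : EuclideanSpace ℝ (Fin d), f (c + (-a) • y) = (a ^ d)⁻¹ * ∫ x, f x := by
  have h1 : ∫ y : EuclideanSpace ℝ (Fin d), (fun w => f (c + w)) ((-a) • y)
      = |((-a) ^ Module.finrank ℝ (EuclideanSpace ℝ (Fin d)))⁻¹| •
        ∫ w, f (c + w) := Measure.integral_comp_smul volume (fun w => f (c + w)) (-a)
  have h2 : ∫ w : EuclideanSpace ℝ (Fin d), f (c + w) = ∫ x, f x :=
    integral_add_left_eq_self f c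
  have h3 : Module.finrank ℝ (EuclideanSpace ℝ (Fin d)) = d := by
    simp [finrank_euclideanSpace]
  rw [show (fun y : EuclideanSpace ℝ (Fin d) => f (c + (-a) • y))
      = fun y => (fun w => f (c + w)) ((-a) • y) from rfl] at *
  rw [h1, h2, h3, smul_eq_mul]
  congr 1
  rw [abs_inv, abs_pow, abs_neg, abs_of_pos ha]

/-- If `f, g` are bounded probability densities on a bounded set `Ω ⊂ ℝ^d`
(extended by zero outside `Ω`), then the interpolation density
`σ(z) = ∫₀¹ ∫_Ω f((z−ty)/(1−t)) g(y) (1−t)^{−d} dy dt` is essentially bounded, with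
`σ(z) ≤ C (‖f‖_∞ + ‖g‖_∞)` for a constant `C` depending only on the dimension `d`. -/
theorem stmt_0 (d : ℕ) :
    ∃ C : ℝ, 0 < C ∧
      ∀ (Ω : Set (EuclideanSpace ℝ (Fin d))) (f g : EuclideanSpace ℝ (Fin d) → ℝ)
        (Cf Cg : ℝ),
        Bornology.IsBounded Ω →
        Measurable f → Measurable g →
        (∀ x, 0 ≤ f x) → (∀ x, 0 ≤ g x) →
        (∀ x, f x ≤ Cf) → (∀ x, g x ≤ Cg) →
        (∀ x, x ∉ Ω → f x = 0) → (∀ x, x ∉ Ω → g x = 0) →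
        (∫ x, f x = 1) → (∫ x, g x = 1) →
        ∀ z : EuclideanSpace ℝ (Fin d),
          (∫ t in Ioo (0:ℝ) 1, ∫ y in Ω,
              f ((1 - t)⁻¹ • (z - t • y)) * g y * ((1 - t) ^ d)⁻¹)
            ≤ C * (Cf + Cg) := by
  refine ⟨2 ^ d, by positivity, ?_⟩
  intro Ω f g Cf Cg hΩ hfm hgm hf0 hg0 hfC hgC hfΩ hgΩ hfint hgint z
  have hCf : 0 ≤ Cf := le_trans (hf0 0) (hfC 0)
  have hCg : 0 ≤ Cg := le_trans (hg0 0) (hgC 0)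
  have h2d : (0:ℝ) < 2 ^ d := by positivity
  have hfI : Integrable f := by
    by_contra h; rw [integral_undef h] at hfint; norm_num at hfint
  have hgI : Integrable g := by
    by_contra h; rw [integral_undef h] at hgint; norm_num at hgint
  -- key pointwise bound on the inner integral
  have key : ∀ t ∈ Ioo (0:ℝ) 1,
      (∫ y in Ω, f ((1 - t)⁻¹ • (z - t • y)) * g y * ((1 - t) ^ d)⁻¹)
        ≤ 2 ^ d * (Cf + Cg) := by
    intro t ht
    obtain ⟨ht0, ht1⟩ := ht
    have h1t : (0:ℝ) < 1 - t := by linarith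
    rcases le_or_gt t (1/2) with hhalf | hhalf
    · -- case t ≤ 1/2 : use f ≤ Cf and (1-t)^{-d} ≤ 2^d
      have hpow : ((1 - t) ^ d)⁻¹ ≤ 2 ^ d := by
        rw [inv_le_comm₀ (by positivity) h2d, ← inv_pow]
        exact pow_le_pow_left₀ (by norm_num) (by linarith) d
      have hdomI : Integrable (fun y => Cf * 2 ^ d * g y) (volume.restrict Ω) :=
        ((hgI.mono_measure Measure.restrict_le_self).const_mul _)
      have step1 : (∫ y in Ω, f ((1 - t)⁻¹ • (z - t • y)) * g y * ((1 - t) ^ d)⁻¹)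
          ≤ ∫ y in Ω, Cf * 2 ^ d * g y := by
        refine integral_mono_of_nonneg (Filter.Eventually.of_forall fun y => ?_) hdomI
          (Filter.Eventually.of_forall fun y => ?_)
        · exact mul_nonneg (mul_nonneg (hf0 _) (hg0 _)) (inv_nonneg.2 (pow_nonneg h1t.le d))
        · have h1 : f ((1 - t)⁻¹ • (z - t • y)) * g y * ((1 - t) ^ d)⁻¹
              ≤ Cf * g y * 2 ^ d := by
            apply mul_le_mul (mul_le_mul (hfC _) le_rfl (hg0 _) hCf) hpow
              (inv_nonneg.2 (pow_nonneg h1t.le d)) (mul_nonneg hCf (hg0 y))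
          calc f ((1 - t)⁻¹ • (z - t • y)) * g y * ((1 - t) ^ d)⁻¹
              ≤ Cf * g y * 2 ^ d := h1
            _ = Cf * 2 ^ d * g y := by ring
      have step2 : (∫ y in Ω, Cf * 2 ^ d * g y) ≤ ∫ y, Cf * 2 ^ d * g y :=
        setIntegral_le_integral (hgI.const_mul _)
          (Filter.Eventually.of_forall fun y => mul_nonneg (by positivity) (hg0 y))
      have step3 : (∫ y, Cf * 2 ^ d * g y) = Cf * 2 ^ d := by
        rw [integral_const_mul, hgint, mul_one]
      nlinarith [step1, step2]
    · -- case t > 1/2 : use g ≤ Cg and change of variables in y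
      have ht0' : (0:ℝ) < t := ht0
      set a : ℝ := (1 - t)⁻¹ * t with ha_def
      have ha : 0 < a := by positivity
      set c : EuclideanSpace ℝ (Fin d) := (1 - t)⁻¹ • z with hc_def
      have hrw : ∀ y : EuclideanSpace ℝ (Fin d),
          (1 - t)⁻¹ • (z - t • y) = c + (-a) • y := by
        intro y
        rw [smul_sub, hc_def, smul_smul, ha_def, neg_smul]
        abel
      have hhI : Integrable (fun y => f (c + (-a) • y)) := by
        have h1 : Integrable (fun w => f (c + w)) := hfI.comp_add_left c
        exact h1.comp_smul (R := -a) (by exact neg_ne_zero.2 ha.ne')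
      have hint : ∫ y, f (c + (-a) • y) = (a ^ d)⁻¹ := by
        rw [aux_comp_integral f c ha, hfint, mul_one]
      have hdomI : Integrable (fun y => f (c + (-a) • y) * (Cg * ((1 - t) ^ d)⁻¹)) :=
        hhI.mul_const _
      have step1 : (∫ y in Ω, f ((1 - t)⁻¹ • (z - t • y)) * g y * ((1 - t) ^ d)⁻¹)
          ≤ ∫ y in Ω, f (c + (-a) • y) * (Cg * ((1 - t) ^ d)⁻¹) := by
        refine integral_mono_of_nonneg (Filter.Eventually.of_forall fun y => ?_)
          (hdomI.mono_measure Measure.restrict_le_self)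
          (Filter.Eventually.of_forall fun y => ?_)
        · exact mul_nonneg (mul_nonneg (hf0 _) (hg0 _)) (inv_nonneg.2 (pow_nonneg h1t.le d))
        · dsimp only
          rw [hrw y]
          have hinv : (0:ℝ) ≤ ((1 - t) ^ d)⁻¹ := inv_nonneg.2 (pow_nonneg h1t.le d)
          calc f (c + (-a) • y) * g y * ((1 - t) ^ d)⁻¹
              ≤ f (c + (-a) • y) * Cg * ((1 - t) ^ d)⁻¹ :=
                mul_le_mul_of_nonneg_right
                  (mul_le_mul_of_nonneg_left (hgC y) (hf0 _)) hinv
            _ = f (c + (-a) • y) * (Cg * ((1 - t) ^ d)⁻¹) := by ring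
      have step2 : (∫ y in Ω, f (c + (-a) • y) * (Cg * ((1 - t) ^ d)⁻¹))
          ≤ ∫ y, f (c + (-a) • y) * (Cg * ((1 - t) ^ d)⁻¹) := by
        refine setIntegral_le_integral hdomI (Filter.Eventually.of_forall fun y => ?_)
        have hinv : (0:ℝ) ≤ ((1 - t) ^ d)⁻¹ := inv_nonneg.2 (pow_nonneg h1t.le d)
        have := hf0 (c + (-a) • y)
        positivity
      have step3 : (∫ y, f (c + (-a) • y) * (Cg * ((1 - t) ^ d)⁻¹))
          = (t ^ d)⁻¹ * Cg := by
        rw [integral_mul_const, hint, ha_def]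
        have h1 : ((1:ℝ) - t) ≠ 0 := h1t.ne'
        have h2 : t ≠ 0 := ht0.ne'
        field_simp
        rw [div_pow, div_mul_eq_mul_div, div_mul_cancel₀ _ (pow_ne_zero d h1)]
        ring
      have hpowt : (t ^ d)⁻¹ ≤ 2 ^ d := by
        rw [inv_le_comm₀ (by positivity) h2d, ← inv_pow]
        exact pow_le_pow_left₀ (by norm_num) (by linarith) d
      calc (∫ y in Ω, f ((1 - t)⁻¹ • (z - t • y)) * g y * ((1 - t) ^ d)⁻¹)
          ≤ (t ^ d)⁻¹ * Cg := by rw [← step3]; exact le_trans step1 step2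
        _ ≤ 2 ^ d * Cg := mul_le_mul_of_nonneg_right hpowt hCg
        _ ≤ 2 ^ d * (Cf + Cg) := by nlinarith
  -- conclude: integrate the constant bound over (0,1)
  have nonneg : ∀ t ∈ Ioo (0:ℝ) 1,
      0 ≤ ∫ y in Ω, f ((1 - t)⁻¹ • (z - t • y)) * g y * ((1 - t) ^ d)⁻¹ := by
    intro t ht
    obtain ⟨ht0, ht1⟩ := ht
    have h1t : (0:ℝ) < 1 - t := by linarith
    refine integral_nonneg fun y => ?_
    have := hf0 ((1 - t)⁻¹ • (z - t • y)); have := hg0 y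
    have := inv_nonneg.2 (pow_nonneg h1t.le d)
    positivity
  have hconstI : Integrable (fun _ : ℝ => 2 ^ d * (Cf + Cg))
      (volume.restrict (Ioo (0:ℝ) 1)) := by
    refine integrableOn_const ?_
    simp [Real.volume_Ioo]
  have main : (∫ t in Ioo (0:ℝ) 1, ∫ y in Ω,
        f ((1 - t)⁻¹ • (z - t • y)) * g y * ((1 - t) ^ d)⁻¹)
      ≤ ∫ t in Ioo (0:ℝ) 1, (2:ℝ) ^ d * (Cf + Cg) := by
    refine integral_mono_of_nonneg ?_ hconstI ?_
    · exact (ae_restrict_mem measurableSet_Ioo).mono fun t ht => nonneg t ht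
    · exact (ae_restrict_mem measurableSet_Ioo).mono fun t ht => key t ht
  calc (∫ t in Ioo (0:ℝ) 1, ∫ y in Ω,
        f ((1 - t)⁻¹ • (z - t • y)) * g y * ((1 - t) ^ d)⁻¹)
      ≤ ∫ t in Ioo (0:ℝ) 1, (2:ℝ) ^ d * (Cf + Cg) := main
    _ = 2 ^ d * (Cf + Cg) := by
        rw [setIntegral_const]
        simp [Real.volume_Ioo]
end

section
/- Let μ and ν be probability measures on ℝ^d with densities f and g, and let σ be the pushforward of U[0,1] ⊗ μ ⊗ ν under π(t,x,y) = (1−t)x + ty. Then σ is absolutely continuous with respect to Lebesgue measure with density σ(z) = ∫₀¹ ∫ f((z−ty)/(1−t)) g(y) (1−t)^{−d} dy dt. -/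
open MeasureTheory Set
open scoped ENNReal

lemma lintegral_comp_smul_aux {E : Type*} [NormedAddCommGroup E] [NormedSpace ℝ E]
    [MeasurableSpace E] [BorelSpace E] [FiniteDimensional ℝ E]
    (μ : Measure E) [μ.IsAddHaarMeasure] (h : E → ℝ≥0∞) (hm : Measurable h)
    {r : ℝ} (hr : r ≠ 0) :
    ∫⁻ x, h (r • x) ∂μ
      = ENNReal.ofReal |(r ^ Module.finrank ℝ E)⁻¹| * ∫⁻ x, h x ∂μ := by
  rw [show (∫⁻ x, h (r • x) ∂μ) = ∫⁻ y, h y ∂(Measure.map (r • ·) μ) from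
    (lintegral_map hm (measurable_const_smul r)).symm,
    Measure.map_addHaar_smul μ hr, lintegral_smul_measure, smul_eq_mul]

set_option maxHeartbeats 1000000 in
/-- if `μ = f dx` and `ν = g dx` are absolutely continuous probability measures
on `ℝ^d` and `σ` is the pushforward of `U[0,1] ⊗ μ ⊗ ν` under `π(t,x,y) = (1−t)x + ty`, then
`σ` is absolutely continuous with respect to Lebesgue measure, with density
`σ(z) = ∫₀¹ ∫ f((z−ty)/(1−t)) g(y) (1−t)^{−d} dy dt`. -/
theorem stmt_2 (d : ℕ) (f g : EuclideanSpace ℝ (Fin d) → ℝ)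
    (hfm : Measurable f) (hgm : Measurable g)
    (hf0 : ∀ x, 0 ≤ f x) (hg0 : ∀ x, 0 ≤ g x)
    (hf1 : ∫ x, f x = 1) (hg1 : ∫ x, g x = 1)
    (μ ν : Measure (EuclideanSpace ℝ (Fin d)))
    (hμ : μ = volume.withDensity (fun x => ENNReal.ofReal (f x)))
    (hν : ν = volume.withDensity (fun x => ENNReal.ofReal (g x)))
    (σm : Measure (EuclideanSpace ℝ (Fin d)))
    (hσ : σm = Measure.map
        (fun p : ℝ × EuclideanSpace ℝ (Fin d) × EuclideanSpace ℝ (Fin d) =>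
          (1 - p.1) • p.2.1 + p.1 • p.2.2)
        (((volume : Measure ℝ).restrict (Icc (0:ℝ) 1)).prod (μ.prod ν))) :
    σm ≪ (volume : Measure (EuclideanSpace ℝ (Fin d))) ∧
      σm = volume.withDensity (fun z => ENNReal.ofReal
        (∫ t in Ioo (0:ℝ) 1, ∫ y,
          f ((1 - t)⁻¹ • (z - t • y)) * g y * ((1 - t) ^ d)⁻¹)) := by
  have hd : Module.finrank ℝ (EuclideanSpace ℝ (Fin d)) = d := finrank_euclideanSpace_fin
  -- integrability and probability-measure facts
  have hfi : Integrable f := by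
    by_contra h; rw [integral_undef h] at hf1; norm_num at hf1
  have hgi : Integrable g := by
    by_contra h; rw [integral_undef h] at hg1; norm_num at hg1
  have hμ1 : μ univ = 1 := by
    rw [hμ, withDensity_apply _ MeasurableSet.univ, Measure.restrict_univ,
      ← ofReal_integral_eq_lintegral_ofReal hfi (ae_of_all _ hf0), hf1, ENNReal.ofReal_one]
  have hν1 : ν univ = 1 := by
    rw [hν, withDensity_apply _ MeasurableSet.univ, Measure.restrict_univ,
      ← ofReal_integral_eq_lintegral_ofReal hgi (ae_of_all _ hg0), hg1, ENNReal.ofReal_one]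
  haveI : IsProbabilityMeasure μ := ⟨hμ1⟩
  haveI : IsProbabilityMeasure ν := ⟨hν1⟩
  haveI : IsProbabilityMeasure ((volume : Measure ℝ).restrict (Icc (0:ℝ) 1)) :=
    ⟨by simp [Real.volume_Icc]⟩
  have hP : Measurable fun p : ℝ × EuclideanSpace ℝ (Fin d) × EuclideanSpace ℝ (Fin d) =>
      (1 - p.1) • p.2.1 + p.1 • p.2.2 := by fun_prop
  set Φ : EuclideanSpace ℝ (Fin d) → ℝ≥0∞ := fun z =>
    ∫⁻ t in Ioo (0:ℝ) 1, ∫⁻ y, ENNReal.ofReal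
      (f ((1 - t)⁻¹ • (z - t • y)) * g y * ((1 - t) ^ d)⁻¹) with hΦ
  have hΦm : Measurable Φ := by
    have h1 : ∀ z : EuclideanSpace ℝ (Fin d), Φ z = ∫⁻ p : ℝ × EuclideanSpace ℝ (Fin d),
        ENNReal.ofReal (f ((1 - p.1)⁻¹ • (z - p.1 • p.2)) * g p.2 * ((1 - p.1) ^ d)⁻¹)
          ∂(((volume : Measure ℝ).restrict (Ioo (0:ℝ) 1)).prod volume) := by
      intro z
      rw [hΦ, lintegral_prod _ (by fun_prop)]
    rw [funext h1]
    exact Measurable.lintegral_prod_right'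
      (f := fun q : EuclideanSpace ℝ (Fin d) × (ℝ × EuclideanSpace ℝ (Fin d)) =>
        ENNReal.ofReal (f ((1 - q.2.1)⁻¹ • (q.1 - q.2.1 • q.2.2)) * g q.2.2 * ((1 - q.2.1) ^ d)⁻¹))
      (by fun_prop)
  -- the key identity
  have key : σm = volume.withDensity Φ := by
    ext s hs
    have hind : Measurable (s.indicator (1 : EuclideanSpace ℝ (Fin d) → ℝ≥0∞)) :=
      measurable_one.indicator hs
    have key2 : ∀ t ∈ Ioo (0:ℝ) 1,
        (μ.prod ν) (Prod.mk t ⁻¹'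
          ((fun p : ℝ × EuclideanSpace ℝ (Fin d) × EuclideanSpace ℝ (Fin d) =>
            (1 - p.1) • p.2.1 + p.1 • p.2.2) ⁻¹' s))
        = ∫⁻ u, (∫⁻ y, ENNReal.ofReal
            (f ((1 - t)⁻¹ • (u - t • y)) * g y * ((1 - t) ^ d)⁻¹)) * s.indicator 1 u := by
      intro t ht
      obtain ⟨ht0, ht1⟩ := ht
      have hc : (0:ℝ) < 1 - t := by linarith
      have hc' : (1 - t) ≠ 0 := ne_of_gt hc
      have hA : MeasurableSet (Prod.mk t ⁻¹'
          ((fun p : ℝ × EuclideanSpace ℝ (Fin d) × EuclideanSpace ℝ (Fin d) =>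
            (1 - p.1) • p.2.1 + p.1 • p.2.2) ⁻¹' s)) := measurable_prodMk_left (hP hs)
      calc (μ.prod ν) (Prod.mk t ⁻¹'
          ((fun p : ℝ × EuclideanSpace ℝ (Fin d) × EuclideanSpace ℝ (Fin d) =>
            (1 - p.1) • p.2.1 + p.1 • p.2.2) ⁻¹' s))
          = ∫⁻ q : EuclideanSpace ℝ (Fin d) × EuclideanSpace ℝ (Fin d),
              s.indicator 1 ((1 - t) • q.1 + t • q.2) ∂(μ.prod ν) := by
            rw [← lintegral_indicator_one hA]
            refine lintegral_congr fun q => ?_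
            by_cases h : (1 - t) • q.1 + t • q.2 ∈ s <;>
              simp [indicator_apply, mem_preimage, h]
        _ = ∫⁻ x, (∫⁻ y, s.indicator 1 ((1 - t) • x + t • y) ∂ν) ∂μ :=
            lintegral_prod _ ((hind.comp (by fun_prop)).aemeasurable)
        _ = ∫⁻ x, (∫⁻ y, ENNReal.ofReal (g y) * s.indicator 1 ((1 - t) • x + t • y)) ∂μ := by
            refine lintegral_congr fun x => ?_
            rw [hν, lintegral_withDensity_eq_lintegral_mul _ hgm.ennreal_ofReal
              (show Measurable fun y : EuclideanSpace ℝ (Fin d) =>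
                  s.indicator 1 ((1 - t) • x + t • y) from hind.comp (by fun_prop))]
            simp only [Pi.mul_apply]
        _ = ∫⁻ x, ENNReal.ofReal (f x) *
              ∫⁻ y, ENNReal.ofReal (g y) * s.indicator 1 ((1 - t) • x + t • y) := by
            rw [hμ, lintegral_withDensity_eq_lintegral_mul _ hfm.ennreal_ofReal
              (Measurable.lintegral_prod_right'
                (f := fun q : EuclideanSpace ℝ (Fin d) × EuclideanSpace ℝ (Fin d) =>
                  ENNReal.ofReal (g q.2) * s.indicator 1 ((1 - t) • q.1 + t • q.2))
                ((hgm.ennreal_ofReal.comp measurable_snd).mul (hind.comp (by fun_prop))) :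
                Measurable fun x : EuclideanSpace ℝ (Fin d) =>
                  ∫⁻ y, ENNReal.ofReal (g y) * s.indicator 1 ((1 - t) • x + t • y))]
            simp only [Pi.mul_apply]
        _ = ∫⁻ x, ∫⁻ y, ENNReal.ofReal (f x) *
              (ENNReal.ofReal (g y) * s.indicator 1 ((1 - t) • x + t • y)) :=
            lintegral_congr fun x => (lintegral_const_mul' _ _ ENNReal.ofReal_ne_top).symm
        _ = ∫⁻ y, ∫⁻ x, ENNReal.ofReal (f x) *
              (ENNReal.ofReal (g y) * s.indicator 1 ((1 - t) • x + t • y)) :=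
            lintegral_lintegral_swap
              (((hfm.ennreal_ofReal.comp measurable_fst).mul
                ((hgm.ennreal_ofReal.comp measurable_snd).mul
                  (hind.comp (by fun_prop)))).aemeasurable)
        _ = ∫⁻ y, ENNReal.ofReal (g y) *
              ∫⁻ x, ENNReal.ofReal (f x) * s.indicator 1 ((1 - t) • x + t • y) := by
            refine lintegral_congr fun y => ?_
            rw [← lintegral_const_mul' (ENNReal.ofReal (g y)) _ ENNReal.ofReal_ne_top]
            exact lintegral_congr fun x => by ring
        _ = ∫⁻ y, ENNReal.ofReal (g y) * (ENNReal.ofReal |((1 - t) ^ d)⁻¹| *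
              ∫⁻ u, ENNReal.ofReal (f ((1 - t)⁻¹ • (u - t • y))) * s.indicator 1 u) := by
            refine lintegral_congr fun y => ?_
            congr 1
            have e1 : ∀ x : EuclideanSpace ℝ (Fin d),
                ENNReal.ofReal (f x) * s.indicator 1 ((1 - t) • x + t • y)
                = (fun w => ENNReal.ofReal (f ((1 - t)⁻¹ • w)) *
                    s.indicator 1 (w + t • y)) ((1 - t) • x) := by
              intro x
              simp only [smul_smul, inv_mul_cancel₀ hc', one_smul]
            rw [lintegral_congr e1, lintegral_comp_smul_aux volume _
              (show Measurable fun w : EuclideanSpace ℝ (Fin d) =>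
                  ENNReal.ofReal (f ((1 - t)⁻¹ • w)) * s.indicator 1 (w + t • y) from
                (((hfm.comp (measurable_const_smul _)).ennreal_ofReal).mul
                  (hind.comp (measurable_add_const _)))) hc', hd]
            congr 1
            rw [← lintegral_add_right_eq_self
              (fun u => ENNReal.ofReal (f ((1 - t)⁻¹ • (u - t • y))) * s.indicator 1 u) (t • y)]
            exact lintegral_congr fun w => by rw [add_sub_cancel_right]
        _ = ∫⁻ y, ∫⁻ u, (ENNReal.ofReal (f ((1 - t)⁻¹ • (u - t • y))) * ENNReal.ofReal (g y) *
              ENNReal.ofReal ((1 - t) ^ d)⁻¹) * s.indicator 1 u := by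
            refine lintegral_congr fun y => ?_
            rw [abs_of_nonneg (inv_nonneg.2 (pow_nonneg hc.le d)), ← mul_assoc,
              ← lintegral_const_mul' _ _
                (ENNReal.mul_ne_top ENNReal.ofReal_ne_top ENNReal.ofReal_ne_top)]
            exact lintegral_congr fun u => by ring
        _ = ∫⁻ u, ∫⁻ y, (ENNReal.ofReal (f ((1 - t)⁻¹ • (u - t • y))) * ENNReal.ofReal (g y) *
              ENNReal.ofReal ((1 - t) ^ d)⁻¹) * s.indicator 1 u :=
            lintegral_lintegral_swap
              (((by fun_prop : Measurable fun p :
                  EuclideanSpace ℝ (Fin d) × EuclideanSpace ℝ (Fin d) =>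
                  ENNReal.ofReal (f ((1 - t)⁻¹ • (p.2 - t • p.1))) * ENNReal.ofReal (g p.1) *
                    ENNReal.ofReal ((1 - t) ^ d)⁻¹).mul
                (hind.comp measurable_snd)).aemeasurable)
        _ = ∫⁻ u, (∫⁻ y, ENNReal.ofReal (f ((1 - t)⁻¹ • (u - t • y))) * ENNReal.ofReal (g y) *
              ENNReal.ofReal ((1 - t) ^ d)⁻¹) * s.indicator 1 u :=
            lintegral_congr fun u =>
              lintegral_mul_const' _ _ (by by_cases h : u ∈ s <;> simp [h])
        _ = ∫⁻ u, (∫⁻ y, ENNReal.ofReal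
              (f ((1 - t)⁻¹ • (u - t • y)) * g y * ((1 - t) ^ d)⁻¹)) * s.indicator 1 u := by
            refine lintegral_congr fun u => ?_
            congr 1
            refine lintegral_congr fun y => ?_
            rw [ENNReal.ofReal_mul (mul_nonneg (hf0 _) (hg0 _)), ENNReal.ofReal_mul (hf0 _)]
    rw [hσ, Measure.map_apply hP hs, withDensity_apply _ hs,
      Measure.prod_apply (hP hs), ← Measure.restrict_congr_set Ioo_ae_eq_Icc,
      setLIntegral_congr_fun measurableSet_Ioo (fun t ht => key2 t ht)]
    rw [lintegral_lintegral_swap (f := fun t u => (∫⁻ y, ENNReal.ofReal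
        (f ((1 - t)⁻¹ • (u - t • y)) * g y * ((1 - t) ^ d)⁻¹)) * s.indicator 1 u)
      (((Measurable.lintegral_prod_right'
        (f := fun q : (ℝ × EuclideanSpace ℝ (Fin d)) × EuclideanSpace ℝ (Fin d) =>
          ENNReal.ofReal
            (f ((1 - q.1.1)⁻¹ • (q.1.2 - q.1.1 • q.2)) * g q.2 * ((1 - q.1.1) ^ d)⁻¹))
        (by fun_prop)).mul (hind.comp measurable_snd)).aemeasurable)]
    have h2 : ∀ u : EuclideanSpace ℝ (Fin d), (∫⁻ t in Ioo (0:ℝ) 1, (∫⁻ y, ENNReal.ofReal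
        (f ((1 - t)⁻¹ • (u - t • y)) * g y * ((1 - t) ^ d)⁻¹)) * s.indicator 1 u)
        = s.indicator Φ u := by
      intro u
      rw [lintegral_mul_const' _ _ (by by_cases h : u ∈ s <;> simp [h])]
      by_cases h : u ∈ s <;> simp [h, hΦ]
    rw [lintegral_congr h2, lintegral_indicator hs]
  refine ⟨by rw [key]; exact withDensity_absolutelyContinuous _ _, ?_⟩
  rw [key]
  refine (withDensity_congr_ae ?_).symm
  -- a.e. identification of the density
  have hmass : ∫⁻ z, Φ z = 1 := by
    haveI : IsProbabilityMeasure σm := by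
      rw [hσ]; exact Measure.isProbabilityMeasure_map hP.aemeasurable
    have h1 : (volume.withDensity Φ) univ = 1 := by rw [← key]; exact measure_univ
    rwa [withDensity_apply _ MeasurableSet.univ, Measure.restrict_univ] at h1
  have hfin : ∀ᵐ z : EuclideanSpace ℝ (Fin d) ∂volume, Φ z < ∞ :=
    ae_lt_top hΦm (by rw [hmass]; exact ENNReal.one_ne_top)
  filter_upwards [hfin] with z hz
  set ψ : ℝ → ℝ≥0∞ := fun t => ∫⁻ y, ENNReal.ofReal
    (f ((1 - t)⁻¹ • (z - t • y)) * g y * ((1 - t) ^ d)⁻¹) with hψ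
  have hψm : Measurable ψ := Measurable.lintegral_prod_right'
    (f := fun q : ℝ × EuclideanSpace ℝ (Fin d) =>
      ENNReal.ofReal (f ((1 - q.1)⁻¹ • (z - q.1 • q.2)) * g q.2 * ((1 - q.1) ^ d)⁻¹))
    (by fun_prop)
  have hψfin : ∀ᵐ t ∂((volume : Measure ℝ).restrict (Ioo (0:ℝ) 1)), ψ t < ∞ :=
    ae_lt_top hψm hz.ne
  have hinner : ∀ t ∈ Ioo (0:ℝ) 1,
      (∫ y, f ((1 - t)⁻¹ • (z - t • y)) * g y * ((1 - t) ^ d)⁻¹) = (ψ t).toReal := by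
    intro t ht
    rw [integral_eq_lintegral_of_nonneg_ae
      (ae_of_all _ fun y => mul_nonneg (mul_nonneg (hf0 _) (hg0 _))
        (inv_nonneg.2 (pow_nonneg (by linarith [ht.2]) d)))
      ((by fun_prop : Measurable fun y : EuclideanSpace ℝ (Fin d) =>
        f ((1 - t)⁻¹ • (z - t • y)) * g y * ((1 - t) ^ d)⁻¹).aestronglyMeasurable)]
  rw [show (∫ t in Ioo (0:ℝ) 1, ∫ y,
        f ((1 - t)⁻¹ • (z - t • y)) * g y * ((1 - t) ^ d)⁻¹)
      = ∫ t in Ioo (0:ℝ) 1, (ψ t).toReal from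
    setIntegral_congr_fun measurableSet_Ioo fun t ht => hinner t ht,
    integral_toReal hψm.aemeasurable hψfin, ENNReal.ofReal_toReal hz.ne]
end

section
/- Let Ω ⊂ ℝ^d be open, bounded and convex, f, g ∈ L^∞(Ω) probability densities on Ω, and suppose inf_{x∈Ω} f(x) = ε > 0. Then there is a constant C depending only on Ω such that the interpolation density σ(x) = ∫₀¹ ∫_Ω f((x−ty)/(1−t)) g(y) (1−t)^{−d} dy dt satisfies σ(x) ≥ C ε · dist(x, ∂Ω) for all x ∈ Ω. -/
open MeasureTheory Set Metric

lemma ball_infDist_frontier_subset {E : Type*} [NormedAddCommGroup E] [NormedSpace ℝ E]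
    {Ω : Set E} (hΩo : IsOpen Ω) {x : E} (hx : x ∈ Ω) :
    Metric.ball x (Metric.infDist x (frontier Ω)) ⊆ Ω := by
  intro z hz
  rw [mem_ball, dist_comm] at hz
  by_contra hzΩ
  have hz' : z ∉ closure Ω := by
    intro hcl
    have hzf : z ∈ frontier Ω := by
      rw [hΩo.frontier_eq]; exact ⟨hcl, hzΩ⟩
    exact absurd hz (not_lt.2 (Metric.infDist_le_dist_of_mem hzf))
  have hmeet : (segment ℝ x z ∩ frontier Ω).Nonempty := by
    by_contra hemp
    rw [not_nonempty_iff_eq_empty, eq_empty_iff_forall_notMem] at hemp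
    have hcover : segment ℝ x z ⊆ Ω ∪ (closure Ω)ᶜ := by
      intro w hw
      by_cases hwΩ : w ∈ Ω
      · exact Or.inl hwΩ
      · refine Or.inr fun hwc => hemp w ⟨hw, ?_⟩
        rw [hΩo.frontier_eq]; exact ⟨hwc, hwΩ⟩
    rcases (convex_segment x z).isPreconnected Ω (closure Ω)ᶜ hΩo
        isClosed_closure.isOpen_compl hcover
        ⟨x, left_mem_segment ℝ x z, hx⟩ ⟨z, right_mem_segment ℝ x z, hz'⟩ with ⟨w, _, hw1, hw2⟩
    exact hw2 (subset_closure hw1)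
  obtain ⟨w, hwseg, hwf⟩ := hmeet
  have h1 : dist x w ≤ dist x z := by
    have hmem : w ∈ Metric.closedBall x (dist x z) :=
      (convex_closedBall x (dist x z)).segment_subset (Metric.mem_closedBall_self dist_nonneg)
        (by rw [Metric.mem_closedBall, dist_comm]) hwseg
    rwa [Metric.mem_closedBall, dist_comm] at hmem
  exact absurd (lt_of_le_of_lt h1 hz) (not_lt.2 (Metric.infDist_le_dist_of_mem hwf))

lemma integrableOn_of_bddOn {E : Type*} [MeasurableSpace E] {μ : Measure E} {s : Set E}
    (hs : μ s ≠ ⊤) {h : E → ℝ} (hm : Measurable h) {B : ℝ} (hb : ∀ y, |h y| ≤ B) :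
    IntegrableOn h s μ := by
  haveI : IsFiniteMeasure (μ.restrict s) :=
    ⟨by rwa [Measure.restrict_apply_univ, lt_top_iff_ne_top]⟩
  exact ⟨hm.aestronglyMeasurable,
    HasFiniteIntegral.of_bounded (C := B) (ae_of_all _ fun y => by
      rw [Real.norm_eq_abs]; exact hb y)⟩

set_option maxHeartbeats 1000000 in
/-- if `Ω ⊂ ℝ^d` is open, bounded and convex, `f, g` are bounded probability
densities on `Ω` (extended by zero) and `inf_Ω f = ε > 0`, then there is a constant `C > 0`
depending only on `Ω` such that the interpolation density `σ` satisfies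
`σ(x) ≥ C ε dist(x, ∂Ω)` for all `x ∈ Ω`. -/
theorem stmt_3 (d : ℕ) (Ω : Set (EuclideanSpace ℝ (Fin d)))
    (hΩo : IsOpen Ω) (hΩb : Bornology.IsBounded Ω) (hΩc : Convex ℝ Ω) :
    ∃ C : ℝ, 0 < C ∧
      ∀ (f g : EuclideanSpace ℝ (Fin d) → ℝ) (ε Cf Cg : ℝ),
        Measurable f → Measurable g →
        (∀ x, 0 ≤ f x) → (∀ x, 0 ≤ g x) →
        (∀ x, f x ≤ Cf) → (∀ x, g x ≤ Cg) →
        (∀ x, x ∉ Ω → f x = 0) → (∀ x, x ∉ Ω → g x = 0) →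
        (∫ x, f x = 1) → (∫ x, g x = 1) →
        0 < ε → (∀ x ∈ Ω, ε ≤ f x) →
        ∀ x ∈ Ω,
          C * ε * infDist x (frontier Ω) ≤
            ∫ t in Ioo (0:ℝ) 1, ∫ y in Ω,
              f ((1 - t)⁻¹ • (x - t • y)) * g y * ((1 - t) ^ d)⁻¹ := by
  classical
  set D := Metric.diam Ω with hDdef
  have hD0' : (0:ℝ) ≤ D := Metric.diam_nonneg
  refine ⟨(2 * (D + 1))⁻¹, by positivity, ?_⟩
  intro f g ε Cf Cg hfm hgm hf0 hg0 hfC hgC hfΩ hgΩ hfint hgint hε hεf x hx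
  have hΩfin : volume Ω ≠ ⊤ := hΩb.measure_lt_top.ne
  set r := Metric.infDist x (frontier Ω) with hrdef
  have hr0 : 0 ≤ r := Metric.infDist_nonneg
  set F : ℝ → ℝ :=
    fun t => ∫ y in Ω, f ((1 - t)⁻¹ • (x - t • y)) * g y * ((1 - t) ^ d)⁻¹ with hFdef
  have hF0 : ∀ t ∈ Ioo (0:ℝ) 1, 0 ≤ F t := by
    intro t ht
    refine setIntegral_nonneg hΩo.measurableSet fun y _ => ?_
    have h1t : (0:ℝ) ≤ 1 - t := by linarith [ht.2]
    exact mul_nonneg (mul_nonneg (hf0 _) (hg0 _)) (by positivity)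
  rcases eq_or_lt_of_le hr0 with hr | hr
  · rw [← hr, mul_zero]
    exact setIntegral_nonneg measurableSet_Ioo hF0
  -- main case : r > 0
  have hCf0 : 0 ≤ Cf := le_trans (hf0 x) (hfC x)
  have hCg0 : 0 ≤ Cg := le_trans (hg0 x) (hgC x)
  have hfr : (frontier Ω).Nonempty := by
    rcases eq_empty_or_nonempty (frontier Ω) with h | h
    · rw [hrdef, h, Metric.infDist_empty] at hr; exact absurd hr (lt_irrefl 0)
    · exact h
  obtain ⟨w, hw⟩ := hfr
  have hrD : r ≤ D := by
    have h1 : r ≤ dist x w := Metric.infDist_le_dist_of_mem hw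
    have h2 : dist x w ≤ Metric.diam (closure Ω) :=
      Metric.dist_le_diam_of_mem hΩb.closure (subset_closure hx) (frontier_subset_closure hw)
    rw [Metric.diam_closure] at h2
    linarith
  have hD0 : 0 < D := lt_of_lt_of_le hr hrD
  set T := r / (D + r) with hTdef
  have hT0 : 0 < T := div_pos hr (by linarith)
  have hThalf : T ≤ 1 / 2 := by
    rw [hTdef, div_le_iff₀ (by linarith)]; linarith
  have hgΩint : ∫ y in Ω, g y = 1 := by
    rw [setIntegral_eq_integral_of_forall_compl_eq_zero fun y hy => hgΩ y hy]; exact hgint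
  -- the interpolated point stays in Ω for small t
  have hzΩ : ∀ t ∈ Ioo (0:ℝ) T, ∀ y ∈ Ω, (1 - t)⁻¹ • (x - t • y) ∈ Ω := by
    rintro t ⟨ht0, htT⟩ y hy
    have ht1 : t < 1 := by linarith [hThalf]
    have h1t : (0:ℝ) < 1 - t := by linarith
    have htT' : t * (D + r) < r := by
      rw [hTdef, lt_div_iff₀ (by linarith)] at htT; exact htT
    apply ball_infDist_frontier_subset hΩo hx
    rw [mem_ball, dist_eq_norm, ← hrdef]
    have hzx : (1 - t)⁻¹ • (x - t • y) - x = (t * (1 - t)⁻¹) • (x - y) := by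
      match_scalars <;> field_simp <;> ring
    rw [hzx, norm_smul, Real.norm_eq_abs, abs_of_nonneg (by positivity)]
    have hxy : ‖x - y‖ ≤ D := by
      rw [← dist_eq_norm]; exact Metric.dist_le_diam_of_mem hΩb hx hy
    calc t * (1 - t)⁻¹ * ‖x - y‖ ≤ t * (1 - t)⁻¹ * D :=
          mul_le_mul_of_nonneg_left hxy (by positivity)
      _ < r := by
          rw [show t * (1 - t)⁻¹ * D = t * D / (1 - t) by ring, div_lt_iff₀ h1t]
          nlinarith
  -- measurability of F
  have hφm : Measurable fun p : ℝ × EuclideanSpace ℝ (Fin d) =>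
      f ((1 - p.1)⁻¹ • (x - p.1 • p.2)) * g p.2 * ((1 - p.1) ^ d)⁻¹ := by
    refine Measurable.mul (Measurable.mul ?_ (hgm.comp measurable_snd)) ?_
    · exact hfm.comp (((measurable_const.sub measurable_fst).inv).smul
        (measurable_const.sub (measurable_fst.smul measurable_snd)))
    · exact ((measurable_const.sub measurable_fst).pow_const d).inv
  have hFm : StronglyMeasurable F := hφm.stronglyMeasurable.integral_prod_right'
  -- f is integrable on the whole space
  have hfi : Integrable f := by
    have hind : f = Ω.indicator f := by
      ext y; by_cases hy : y ∈ Ω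
      · simp [hy]
      · simp [hy, hfΩ y hy]
    rw [hind, integrable_indicator_iff hΩo.measurableSet]
    exact integrableOn_of_bddOn hΩfin hfm (B := Cf)
      fun y => by rw [abs_of_nonneg (hf0 y)]; exact hfC y
  -- pointwise bound of F on (0,1)
  have hFb : ∀ t ∈ Ioo (0:ℝ) 1, F t ≤ (Cf + Cg) * 2 ^ d := by
    rintro t ⟨ht0, ht1⟩
    have h1t : (0:ℝ) < 1 - t := by linarith
    have hc0 : (0:ℝ) < ((1 - t) ^ d)⁻¹ := by positivity
    have hψm : Measurable fun y : EuclideanSpace ℝ (Fin d) =>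
        f ((1 - t)⁻¹ • (x - t • y)) * g y * ((1 - t) ^ d)⁻¹ :=
      ((hfm.comp ((measurable_const.sub (measurable_id.const_smul t)).const_smul
        (1 - t)⁻¹)).mul hgm).mul_const _
    have hψb : ∀ y, |f ((1 - t)⁻¹ • (x - t • y)) * g y * ((1 - t) ^ d)⁻¹| ≤
        Cf * Cg * ((1 - t) ^ d)⁻¹ := by
      intro y
      rw [abs_of_nonneg (mul_nonneg (mul_nonneg (hf0 _) (hg0 _)) hc0.le)]
      exact mul_le_mul_of_nonneg_right
        (mul_le_mul (hfC _) (hgC _) (hg0 _) hCf0) hc0.le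
    rcases le_total t (1 / 2) with htle | htge
    · -- small t : use the bound on f
      have hcle : ((1 - t) ^ d)⁻¹ ≤ 2 ^ d := by
        have h1 : ((1:ℝ) / 2) ^ d ≤ (1 - t) ^ d :=
          pow_le_pow_left₀ (by norm_num) (by linarith) d
        have h2 := inv_anti₀ (by positivity : (0:ℝ) < ((1:ℝ)/2) ^ d) h1
        rwa [one_div, inv_pow, inv_inv] at h2
      have hmono : F t ≤ ∫ y in Ω, Cf * g y * ((1 - t) ^ d)⁻¹ := by
        apply setIntegral_mono_on
        · exact integrableOn_of_bddOn hΩfin hψm hψb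
        · refine integrableOn_of_bddOn hΩfin ((measurable_const.mul hgm).mul_const _)
            (B := Cf * Cg * ((1 - t) ^ d)⁻¹) fun y => ?_
          rw [abs_of_nonneg (mul_nonneg (mul_nonneg hCf0 (hg0 _)) hc0.le)]
          exact mul_le_mul_of_nonneg_right
            (mul_le_mul_of_nonneg_left (hgC _) hCf0) hc0.le
        · exact hΩo.measurableSet
        · intro y _
          exact mul_le_mul_of_nonneg_right
            (mul_le_mul_of_nonneg_right (hfC _) (hg0 y)) hc0.le
      have heq : ∫ y in Ω, Cf * g y * ((1 - t) ^ d)⁻¹ = Cf * ((1 - t) ^ d)⁻¹ := by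
        rw [integral_mul_const, integral_const_mul, hgΩint, mul_one]
      calc F t ≤ Cf * ((1 - t) ^ d)⁻¹ := heq ▸ hmono
        _ ≤ Cf * 2 ^ d := mul_le_mul_of_nonneg_left hcle hCf0
        _ ≤ (Cf + Cg) * 2 ^ d := by
            have : (0:ℝ) < 2 ^ d := by positivity
            nlinarith
    · -- large t : change of variables
      have ht0' : (0:ℝ) < t := ht0
      have hspos : (0:ℝ) < t * (1 - t)⁻¹ := by positivity
      set s : ℝ := -(t * (1 - t)⁻¹) with hsdef
      have hs : s ≠ 0 := neg_ne_zero.2 (ne_of_gt hspos)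
      set b : EuclideanSpace ℝ (Fin d) := (1 - t)⁻¹ • x with hbdef
      have hrw : ∀ y : EuclideanSpace ℝ (Fin d),
          (1 - t)⁻¹ • (x - t • y) = b + s • y := by
        intro y; rw [hbdef, hsdef]; match_scalars <;> ring
      have hfi2 : Integrable fun y => f (b + s • y) := by
        have h1 : Integrable fun z : EuclideanSpace ℝ (Fin d) => f (b + z) :=
          hfi.comp_add_left b
        exact (integrable_comp_smul_iff volume (fun z => f (b + z)) hs).2 h1
      have hcov : ∫ y, f (b + s • y) = ((t * (1 - t)⁻¹) ^ d)⁻¹ := by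
        have h1 := MeasureTheory.Measure.integral_comp_smul
          (volume : Measure (EuclideanSpace ℝ (Fin d))) (fun z => f (b + z)) s
        simp only [finrank_euclideanSpace_fin] at h1
        rw [h1, integral_add_left_eq_self f b, hfint, smul_eq_mul, mul_one, hsdef,
          abs_inv, abs_pow, abs_neg, abs_of_nonneg hspos.le]
      have hFt : F t = (∫ y in Ω, f (b + s • y) * g y) * ((1 - t) ^ d)⁻¹ := by
        simp only [hFdef, hrw, integral_mul_const]
      have hstep : ∫ y in Ω, f (b + s • y) * g y ≤ Cg * ((t * (1 - t)⁻¹) ^ d)⁻¹ := by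
        calc ∫ y in Ω, f (b + s • y) * g y ≤ ∫ y in Ω, f (b + s • y) * Cg := by
              apply setIntegral_mono_on
              · refine integrableOn_of_bddOn hΩfin
                  ((hfm.comp (measurable_const.add (measurable_id.const_smul s))).mul hgm)
                  (B := Cf * Cg) fun y => ?_
                rw [abs_of_nonneg (mul_nonneg (hf0 _) (hg0 _))]
                exact mul_le_mul (hfC _) (hgC _) (hg0 _) hCf0
              · exact (hfi2.mul_const Cg).integrableOn
              · exact hΩo.measurableSet
              · exact fun y _ => mul_le_mul_of_nonneg_left (hgC y) (hf0 _)
          _ = (∫ y in Ω, f (b + s • y)) * Cg := integral_mul_const _ _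
          _ ≤ (∫ y, f (b + s • y)) * Cg :=
              mul_le_mul_of_nonneg_right
                (setIntegral_le_integral hfi2 (ae_of_all _ fun y => hf0 _)) hCg0
          _ = Cg * ((t * (1 - t)⁻¹) ^ d)⁻¹ := by rw [hcov, mul_comm]
      have hcalc : ((t * (1 - t)⁻¹) ^ d)⁻¹ * ((1 - t) ^ d)⁻¹ = (t ^ d)⁻¹ := by
        rw [mul_pow, inv_pow, mul_inv, inv_inv, mul_assoc,
          mul_inv_cancel₀ (pow_ne_zero d (ne_of_gt h1t)), mul_one]
      have htd : (t ^ d)⁻¹ ≤ 2 ^ d := by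
        have h1 : ((1:ℝ) / 2) ^ d ≤ t ^ d := pow_le_pow_left₀ (by norm_num) (by linarith) d
        have h2 := inv_anti₀ (by positivity : (0:ℝ) < ((1:ℝ)/2) ^ d) h1
        rwa [one_div, inv_pow, inv_inv] at h2
      calc F t = (∫ y in Ω, f (b + s • y) * g y) * ((1 - t) ^ d)⁻¹ := hFt
        _ ≤ Cg * ((t * (1 - t)⁻¹) ^ d)⁻¹ * ((1 - t) ^ d)⁻¹ :=
            mul_le_mul_of_nonneg_right hstep hc0.le
        _ = Cg * (t ^ d)⁻¹ := by rw [mul_assoc, hcalc]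
        _ ≤ Cg * 2 ^ d := mul_le_mul_of_nonneg_left htd hCg0
        _ ≤ (Cf + Cg) * 2 ^ d := by
            have : (0:ℝ) < 2 ^ d := by positivity
            nlinarith
  -- integrability of F on (0,1)
  have hFint : IntegrableOn F (Ioo (0:ℝ) 1) := by
    haveI : IsFiniteMeasure (volume.restrict (Ioo (0:ℝ) 1)) := by
      constructor
      rw [Measure.restrict_apply_univ]
      simp [Real.volume_Ioo]
    refine ⟨hFm.aestronglyMeasurable.restrict,
      HasFiniteIntegral.of_bounded (C := (Cf + Cg) * 2 ^ d) ?_⟩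
    filter_upwards [ae_restrict_mem measurableSet_Ioo] with t ht
    rw [Real.norm_eq_abs, abs_of_nonneg (hF0 t ht)]
    exact hFb t ht
  -- lower bound for F on (0, T)
  have hlow : ∀ t ∈ Ioo (0:ℝ) T, ε ≤ F t := by
    rintro t ⟨ht0, htT⟩
    have ht1 : t < 1 := by linarith [hThalf]
    have h1t : (0:ℝ) < 1 - t := by linarith
    have hc0 : (0:ℝ) < ((1 - t) ^ d)⁻¹ := by positivity
    have hc1 : (1:ℝ) ≤ ((1 - t) ^ d)⁻¹ := by
      have h1 : (1 - t) ^ d ≤ 1 := pow_le_one₀ (by linarith) (by linarith)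
      have h2 : (0:ℝ) < (1 - t) ^ d := by positivity
      have := inv_anti₀ h2 h1
      simpa using this
    have hψm : Measurable fun y : EuclideanSpace ℝ (Fin d) =>
        f ((1 - t)⁻¹ • (x - t • y)) * g y * ((1 - t) ^ d)⁻¹ :=
      ((hfm.comp ((measurable_const.sub (measurable_id.const_smul t)).const_smul
        (1 - t)⁻¹)).mul hgm).mul_const _
    calc ε = ∫ y in Ω, ε * g y := by rw [integral_const_mul, hgΩint, mul_one]
      _ ≤ F t := by
        apply setIntegral_mono_on
        · exact integrableOn_of_bddOn hΩfin (measurable_const.mul hgm) (B := ε * Cg)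
            fun y => by
              rw [abs_of_nonneg (mul_nonneg hε.le (hg0 _))]
              exact mul_le_mul_of_nonneg_left (hgC _) hε.le
        · refine integrableOn_of_bddOn hΩfin hψm (B := Cf * Cg * ((1 - t) ^ d)⁻¹)
            fun y => ?_
          rw [abs_of_nonneg (mul_nonneg (mul_nonneg (hf0 _) (hg0 _)) hc0.le)]
          exact mul_le_mul_of_nonneg_right
            (mul_le_mul (hfC _) (hgC _) (hg0 _) hCf0) hc0.le
        · exact hΩo.measurableSet
        · intro y hy
          have hfz : ε ≤ f ((1 - t)⁻¹ • (x - t • y)) := hεf _ (hzΩ t ⟨ht0, htT⟩ y hy)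
          calc ε * g y ≤ f ((1 - t)⁻¹ • (x - t • y)) * g y :=
                mul_le_mul_of_nonneg_right hfz (hg0 y)
            _ ≤ f ((1 - t)⁻¹ • (x - t • y)) * g y * ((1 - t) ^ d)⁻¹ :=
                le_mul_of_one_le_right (mul_nonneg (hf0 _) (hg0 _)) hc1
  -- put everything together
  have hT1 : Ioo (0:ℝ) T ⊆ Ioo (0:ℝ) 1 := Ioo_subset_Ioo_right (by linarith)
  have step2 : ε * T ≤ ∫ t in Ioo (0:ℝ) T, F t := by
    have h := setIntegral_ge_of_const_le (μ := volume) measurableSet_Ioo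
      (by simp [Real.volume_Ioo]) hlow (hFint.mono_set hT1)
    rwa [Real.volume_real_Ioo, sub_zero, max_eq_left hT0.le, smul_eq_mul, mul_comm] at h
  have step1 : ∫ t in Ioo (0:ℝ) T, F t ≤ ∫ t in Ioo (0:ℝ) 1, F t := by
    refine setIntegral_mono_set hFint ?_ (HasSubset.Subset.eventuallyLE hT1)
    filter_upwards [ae_restrict_mem measurableSet_Ioo] with t ht using hF0 t ht
  have hCr : (2 * (D + 1))⁻¹ * r ≤ T := by
    rw [hTdef, show (2 * (D + 1))⁻¹ * r = r / (2 * (D + 1)) by ring,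
      div_le_div_iff₀ (by linarith) (by linarith)]
    nlinarith
  calc (2 * (D + 1))⁻¹ * ε * r = ε * ((2 * (D + 1))⁻¹ * r) := by ring
    _ ≤ ε * T := mul_le_mul_of_nonneg_left hCr hε.le
    _ ≤ ∫ t in Ioo (0:ℝ) T, F t := step2
    _ ≤ ∫ t in Ioo (0:ℝ) 1, F t := step1
end

section
/- Let Ω ⊂ ℝ^d be open, bounded and convex, f, g ∈ L^∞(Ω) probability densities with g = 0 on a neighbourhood of ∂Ω. Then there exists C > 0 such that the interpolation density σ satisfies σ(x) ≤ C · dist(x, ∂Ω) for all x ∈ Ω. -/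
open MeasureTheory Set Metric

/-- if `Ω ⊂ ℝ^d` is open, bounded and convex, `f, g` are bounded probability
densities on `Ω` (extended by zero), and `g` vanishes on a neighbourhood of `∂Ω`, then there
exists `C > 0` such that the interpolation density `σ` satisfies
`σ(x) ≤ C dist(x, ∂Ω)` for all `x ∈ Ω`. -/
theorem stmt_5 (d : ℕ) (Ω : Set (EuclideanSpace ℝ (Fin d)))
    (hΩo : IsOpen Ω) (hΩb : Bornology.IsBounded Ω) (hΩc : Convex ℝ Ω)
    (f g : EuclideanSpace ℝ (Fin d) → ℝ) (Cf Cg : ℝ)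
    (hfm : Measurable f) (hgm : Measurable g)
    (hf0 : ∀ x, 0 ≤ f x) (hg0 : ∀ x, 0 ≤ g x)
    (hfb : ∀ x, f x ≤ Cf) (hgb : ∀ x, g x ≤ Cg)
    (hfΩ : ∀ x, x ∉ Ω → f x = 0) (hgΩ : ∀ x, x ∉ Ω → g x = 0)
    (hf1 : ∫ x, f x = 1) (hg1 : ∫ x, g x = 1)
    (hδ : ∃ δ₀ : ℝ, 0 < δ₀ ∧ ∀ z, infDist z (frontier Ω) ≤ δ₀ → g z = 0) :
    ∃ C : ℝ, 0 < C ∧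
      ∀ x ∈ Ω,
        (∫ t in Ioo (0:ℝ) 1, ∫ y in Ω,
            f ((1 - t)⁻¹ • (x - t • y)) * g y * ((1 - t) ^ d)⁻¹)
          ≤ C * infDist x (frontier Ω) := by
  obtain ⟨δ₀, hδ₀, hδg⟩ := hδ
  have hCf0 : (0:ℝ) ≤ Cf := le_trans (hf0 0) (hfb 0)
  have hCg0 : (0:ℝ) ≤ Cg := le_trans (hg0 0) (hgb 0)
  have h2d : (0:ℝ) < 2 ^ d := by positivity
  -- the frontier is nonempty
  have hfr : (frontier Ω).Nonempty := by
    rw [nonempty_iff_ne_empty]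
    intro h
    have hz : ∀ z, g z = 0 := fun z => hδg z (by rw [h, infDist_empty]; exact hδ₀.le)
    rw [show g = fun _ => (0:ℝ) from funext hz, integral_zero] at hg1
    exact zero_ne_one hg1
  have hΩne : Ω ≠ univ := by
    intro h
    rw [h, frontier_univ] at hfr
    exact hfr.ne_empty rfl
  have hΩvol : volume Ω ≠ ⊤ := hΩb.measure_lt_top.ne
  have hnormf : ∀ y, ‖f y‖ ≤ Cf := fun y => by
    rw [Real.norm_eq_abs, abs_of_nonneg (hf0 y)]; exact hfb y
  have hnormg : ∀ y, ‖g y‖ ≤ Cg := fun y => by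
    rw [Real.norm_eq_abs, abs_of_nonneg (hg0 y)]; exact hgb y
  have hgiΩ : IntegrableOn g Ω := Measure.integrableOn_of_bounded hΩvol
    hgm.aestronglyMeasurable (ae_of_all _ fun y => hnormg y)
  have hfint : Integrable f := by
    have h1 : IntegrableOn f Ω := Measure.integrableOn_of_bounded hΩvol
      hfm.aestronglyMeasurable (ae_of_all _ fun y => hnormf y)
    have h2 : Ω.indicator f = f := by
      ext z
      by_cases hz : z ∈ Ω
      · exact indicator_of_mem hz f
      · rw [indicator_of_notMem hz, hfΩ z hz]
    rw [← h2]
    exact h1.integrable_indicator hΩo.measurableSet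
  have hgΩ1 : ∫ y in Ω, g y = 1 := by
    rw [setIntegral_eq_integral_of_forall_compl_eq_zero (fun z hz => hgΩ z hz)]
    exact hg1
  -- points in the support of g are at least δ₀ deep inside Ω
  have hball : ∀ y, g y ≠ 0 → ball y δ₀ ⊆ Ω := by
    intro y hy
    have hyΩ : y ∈ Ω := by
      by_contra h; exact hy (hgΩ y h)
    have hyd : δ₀ < infDist y (frontier Ω) := by
      by_contra h; exact hy (hδg y (not_lt.mp h))
    obtain ⟨p, hp, hpd⟩ := exists_mem_frontier_infDist_compl_eq_dist hyΩ hΩne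
    have h1 : δ₀ < infDist y Ωᶜ := by
      rw [hpd]
      exact lt_of_lt_of_le hyd (infDist_le_dist_of_mem hp)
    exact (ball_subset_ball h1.le).trans ball_infDist_compl_subset
  -- Claim A : the integrand vanishes when t·δ₀ exceeds the distance to the boundary
  have hA : ∀ x ∈ Ω, ∀ t ∈ Ioo (0:ℝ) 1, infDist x (frontier Ω) < t * δ₀ →
      ∀ y, f ((1 - t)⁻¹ • (x - t • y)) * g y * ((1 - t) ^ d)⁻¹ = 0 := by
    intro x hx t ht hdx y
    by_cases hgy : g y = 0
    · rw [hgy]; ring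
    by_cases hfz : f ((1 - t)⁻¹ • (x - t • y)) = 0
    · rw [hfz]; ring
    exfalso
    set z := (1 - t)⁻¹ • (x - t • y) with hzdef
    have hzΩ : z ∈ Ω := by
      by_contra h; exact hfz (hfΩ z h)
    have ht1 : (0:ℝ) < 1 - t := by linarith [ht.2]
    have hxz : x = (1 - t) • z + t • y := by
      rw [hzdef, smul_smul, mul_inv_cancel₀ ht1.ne', one_smul]
      abel
    have hsub : ball x (t * δ₀) ⊆ Ω := by
      intro w hw
      have h1 : y + t⁻¹ • (w - x) ∈ ball y δ₀ := by
        rw [mem_ball, dist_eq_norm]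
        have he : y + t⁻¹ • (w - x) - y = t⁻¹ • (w - x) := by abel
        rw [he, norm_smul, Real.norm_eq_abs, abs_of_pos (inv_pos.mpr ht.1)]
        rw [mem_ball, dist_eq_norm] at hw
        calc t⁻¹ * ‖w - x‖ < t⁻¹ * (t * δ₀) :=
              mul_lt_mul_of_pos_left hw (inv_pos.mpr ht.1)
          _ = δ₀ := by rw [← mul_assoc, inv_mul_cancel₀ ht.1.ne', one_mul]
      have h2 := hΩc hzΩ (hball y hgy h1) ht1.le ht.1.le (by ring)
      have h3 : (1 - t) • z + t • (y + t⁻¹ • (w - x)) = w := by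
        rw [hzdef, smul_add, smul_smul, smul_smul, mul_inv_cancel₀ ht1.ne',
          mul_inv_cancel₀ ht.1.ne', one_smul, one_smul]
        abel
      rwa [h3] at h2
    obtain ⟨p, hpf, hpd⟩ := (infDist_lt_iff hfr).mp hdx
    have hpΩ : p ∈ Ω := hsub (mem_ball'.mpr hpd)
    have h0 := hΩo.inter_frontier_eq
    have hmem : p ∈ Ω ∩ frontier Ω := ⟨hpΩ, hpf⟩
    rw [h0] at hmem
    exact notMem_empty p hmem
  -- Inner bound 1 : valid for all t ∈ (0,1)
  have hinner1 : ∀ (x : EuclideanSpace ℝ (Fin d)), ∀ t ∈ Ioo (0:ℝ) 1,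
      (∫ y in Ω, f ((1 - t)⁻¹ • (x - t • y)) * g y * ((1 - t) ^ d)⁻¹)
        ≤ Cf * ((1 - t) ^ d)⁻¹ := by
    intro x t ht
    have ht1 : (0:ℝ) < 1 - t := by linarith [ht.2]
    have hc : (0:ℝ) ≤ ((1 - t) ^ d)⁻¹ := inv_nonneg.mpr (pow_nonneg ht1.le d)
    have hmaj : Integrable (fun y => Cf * g y * ((1 - t) ^ d)⁻¹) (volume.restrict Ω) :=
      (hgiΩ.const_mul Cf).mul_const _
    have hle := integral_mono_of_nonneg (μ := volume.restrict Ω)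
      (f := fun y => f ((1 - t)⁻¹ • (x - t • y)) * g y * ((1 - t) ^ d)⁻¹)
      (g := fun y => Cf * g y * ((1 - t) ^ d)⁻¹)
      (ae_of_all _ fun y => mul_nonneg (mul_nonneg (hf0 _) (hg0 _)) hc)
      hmaj
      (ae_of_all _ fun y =>
        mul_le_mul_of_nonneg_right (mul_le_mul_of_nonneg_right (hfb _) (hg0 y)) hc)
    refine hle.trans (le_of_eq ?_)
    have he : (fun y => Cf * g y * ((1 - t) ^ d)⁻¹)
        = fun y => (Cf * ((1 - t) ^ d)⁻¹) * g y := by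
      funext y; ring
    rw [he, integral_const_mul, hgΩ1, mul_one]
  -- Inner bound 2 : valid for all t ∈ (0,1)
  have hinner2 : ∀ (x : EuclideanSpace ℝ (Fin d)), ∀ t ∈ Ioo (0:ℝ) 1,
      (∫ y in Ω, f ((1 - t)⁻¹ • (x - t • y)) * g y * ((1 - t) ^ d)⁻¹)
        ≤ Cg * (t ^ d)⁻¹ := by
    intro x t ht
    have ht0 := ht.1
    have ht1 : (0:ℝ) < 1 - t := by linarith [ht.2]
    have hc : (0:ℝ) ≤ ((1 - t) ^ d)⁻¹ := inv_nonneg.mpr (pow_nonneg ht1.le d)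
    set s : ℝ := (1 - t)⁻¹ * t with hs
    have hs0 : 0 < s := mul_pos (inv_pos.mpr ht1) ht0
    set b : EuclideanSpace ℝ (Fin d) := (1 - t)⁻¹ • x with hb
    have hrw : ∀ y : EuclideanSpace ℝ (Fin d),
        (1 - t)⁻¹ • (x - t • y) = b - s • y := by
      intro y
      rw [hb, hs, smul_sub, smul_smul]
    have hcomp : Integrable (fun y => f (b - s • y)) :=
      (hfint.comp_sub_left b).comp_smul hs0.ne'
    have hval : ∫ y, f (b - s • y) = (s ^ d)⁻¹ := by
      have h1 := Measure.integral_comp_smul (μ := volume) (fun w => f (b - w)) s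
      rw [finrank_euclideanSpace_fin] at h1
      rw [show (fun y : EuclideanSpace ℝ (Fin d) => f (b - s • y))
          = fun y => (fun w => f (b - w)) (s • y) from rfl, h1,
        integral_sub_left_eq_self f volume b, hf1, smul_eq_mul, mul_one,
        abs_of_nonneg (inv_nonneg.mpr (pow_nonneg hs0.le d))]
    have hmaji : Integrable (fun y => f (b - s • y) * Cg * ((1 - t) ^ d)⁻¹) :=
      (hcomp.mul_const Cg).mul_const _
    have hpt : ∀ y : EuclideanSpace ℝ (Fin d),
        f ((1 - t)⁻¹ • (x - t • y)) * g y * ((1 - t) ^ d)⁻¹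
          ≤ f (b - s • y) * Cg * ((1 - t) ^ d)⁻¹ := by
      intro y
      rw [hrw y]
      exact mul_le_mul_of_nonneg_right
        (mul_le_mul_of_nonneg_left (hgb y) (hf0 _)) hc
    calc (∫ y in Ω, f ((1 - t)⁻¹ • (x - t • y)) * g y * ((1 - t) ^ d)⁻¹)
        ≤ ∫ y in Ω, f (b - s • y) * Cg * ((1 - t) ^ d)⁻¹ :=
          integral_mono_of_nonneg (μ := volume.restrict Ω)
            (ae_of_all _ fun y => mul_nonneg (mul_nonneg (hf0 _) (hg0 _)) hc)
            hmaji.integrableOn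
            (ae_of_all _ hpt)
      _ ≤ ∫ y, f (b - s • y) * Cg * ((1 - t) ^ d)⁻¹ := by
          refine setIntegral_le_integral hmaji (ae_of_all _ fun y => ?_)
          exact mul_nonneg (mul_nonneg (hf0 _) hCg0) hc
      _ = (Cg * ((1 - t) ^ d)⁻¹) * ∫ y, f (b - s • y) := by
          rw [← integral_const_mul]
          congr 1
          funext y; ring
      _ = Cg * ((1 - t) ^ d)⁻¹ * (s ^ d)⁻¹ := by rw [hval]
      _ = Cg * (t ^ d)⁻¹ := by
          rw [hs]
          field_simp
          rw [div_pow, mul_assoc, mul_div_assoc', mul_comm ((1 - t) ^ d), mul_div_assoc,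
            div_self (pow_ne_zero d ht1.ne'), mul_one]
  -- inverse-power bounds for t ≤ 1/2 resp. t ≥ 1/2
  have hpowb : ∀ u : ℝ, (1:ℝ)/2 ≤ u → (u ^ d)⁻¹ ≤ 2 ^ d := by
    intro u hu
    have h1 : ((1:ℝ)/2) ^ d ≤ u ^ d := pow_le_pow_left₀ (by norm_num) hu d
    have h2 : (u ^ d)⁻¹ ≤ (((1:ℝ)/2) ^ d)⁻¹ := inv_anti₀ (by positivity) h1
    calc (u ^ d)⁻¹ ≤ (((1:ℝ)/2) ^ d)⁻¹ := h2
      _ = 2 ^ d := by rw [one_div, ← inv_pow, inv_inv]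
  -- a.e. nonnegativity of the inner integral on (0,1)
  have hnn : ∀ (x : EuclideanSpace ℝ (Fin d)),
      (0:ℝ → ℝ) ≤ᵐ[volume.restrict (Ioo (0:ℝ) 1)]
        fun t => ∫ y in Ω, f ((1 - t)⁻¹ • (x - t • y)) * g y * ((1 - t) ^ d)⁻¹ := by
    intro x
    filter_upwards [ae_restrict_mem measurableSet_Ioo] with t ht
    have ht1 : (0:ℝ) < 1 - t := by linarith [ht.2]
    have hc : (0:ℝ) ≤ ((1 - t) ^ d)⁻¹ := inv_nonneg.mpr (pow_nonneg ht1.le d)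
    exact integral_nonneg fun y => mul_nonneg (mul_nonneg (hf0 _) (hg0 _)) hc
  -- choice of the constant
  refine ⟨(2 ^ (d + 1) * (Cf + Cg) + 1) / δ₀, div_pos (by positivity) hδ₀, ?_⟩
  intro x hx
  set C : ℝ := (2 ^ (d + 1) * (Cf + Cg) + 1) / δ₀ with hC
  set D : ℝ := infDist x (frontier Ω) with hD
  have hD0 : 0 ≤ D := infDist_nonneg
  have hC0 : 0 < C := div_pos (by positivity) hδ₀
  by_cases hcase : δ₀ / 2 ≤ D
  · -- x far from the boundary : uniform bound on the inner integral
    set M : ℝ := 2 ^ d * (Cf + Cg) with hM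
    have hMi : Integrable (fun _ : ℝ => M) (volume.restrict (Ioo (0:ℝ) 1)) :=
      (integrableOn_const_iff).mpr (Or.inr measure_Ioo_lt_top)
    have hle := integral_mono_of_nonneg (hnn x) hMi ?_
    · refine hle.trans ?_
      rw [setIntegral_const, measureReal_def, Real.volume_Ioo, smul_eq_mul]
      have hv : (ENNReal.ofReal (1 - 0)).toReal = 1 := by
        simp [ENNReal.toReal_ofReal]
      rw [hv, one_mul]
      have h1 : M ≤ C * (δ₀ / 2) := by
        have h2 : C * (δ₀ / 2) = (2 ^ (d + 1) * (Cf + Cg) + 1) / 2 := by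
          rw [hC]; field_simp
        rw [h2, hM, pow_succ]
        nlinarith [h2d, hCf0, hCg0]
      calc M ≤ C * (δ₀ / 2) := h1
        _ ≤ C * D := mul_le_mul_of_nonneg_left hcase hC0.le
    · filter_upwards [ae_restrict_mem measurableSet_Ioo] with t ht
      by_cases ht2 : t ≤ 1/2
      · have h1 := hinner1 x t ht
        have h2 : ((1 - t) ^ d)⁻¹ ≤ 2 ^ d := hpowb (1 - t) (by linarith)
        calc (∫ y in Ω, f ((1 - t)⁻¹ • (x - t • y)) * g y * ((1 - t) ^ d)⁻¹)
            ≤ Cf * ((1 - t) ^ d)⁻¹ := h1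
          _ ≤ Cf * 2 ^ d := mul_le_mul_of_nonneg_left h2 hCf0
          _ ≤ M := by rw [hM]; nlinarith [h2d, hCg0]
      · have h1 := hinner2 x t ht
        have h2 : (t ^ d)⁻¹ ≤ 2 ^ d := hpowb t (by linarith)
        calc (∫ y in Ω, f ((1 - t)⁻¹ • (x - t • y)) * g y * ((1 - t) ^ d)⁻¹)
            ≤ Cg * (t ^ d)⁻¹ := h1
          _ ≤ Cg * 2 ^ d := mul_le_mul_of_nonneg_left h2 hCg0
          _ ≤ M := by rw [hM]; nlinarith [h2d, hCf0]
  · -- x close to the boundary : the integrand vanishes for t > D/δ₀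
    push_neg at hcase
    set r : ℝ := D / δ₀ with hr
    have hr0 : 0 ≤ r := div_nonneg hD0 hδ₀.le
    have hr2 : r < 1/2 := by
      rw [hr, div_lt_iff₀ hδ₀]
      linarith
    have hφi : Integrable ((Ioc (0:ℝ) r).indicator fun _ => Cf * 2 ^ d)
        (volume.restrict (Ioo (0:ℝ) 1)) := by
      exact Integrable.indicator
        ((integrableOn_const_iff).mpr (Or.inr measure_Ioo_lt_top)) measurableSet_Ioc
    have hle := integral_mono_of_nonneg (hnn x) hφi ?_
    · refine hle.trans ?_
      rw [integral_indicator measurableSet_Ioc, setIntegral_const, smul_eq_mul]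
      have hmeas : ((volume.restrict (Ioo (0:ℝ) 1)) (Ioc 0 r)).toReal ≤ r := by
        rw [Measure.restrict_apply measurableSet_Ioc]
        have h1 : volume (Ioc (0:ℝ) r ∩ Ioo 0 1) ≤ volume (Ioc (0:ℝ) r) :=
          measure_mono inter_subset_left
        have h2 : volume (Ioc (0:ℝ) r) = ENNReal.ofReal r := by
          rw [Real.volume_Ioc, sub_zero]
        calc (volume (Ioc (0:ℝ) r ∩ Ioo 0 1)).toReal
            ≤ (volume (Ioc (0:ℝ) r)).toReal := by
              refine ENNReal.toReal_mono ?_ h1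
              rw [h2]; exact ENNReal.ofReal_ne_top
          _ = r := by rw [h2, ENNReal.toReal_ofReal hr0]
      calc ((volume.restrict (Ioo (0:ℝ) 1)) (Ioc 0 r)).toReal * (Cf * 2 ^ d)
          ≤ r * (Cf * 2 ^ d) := mul_le_mul_of_nonneg_right hmeas (by positivity)
        _ ≤ C * D := by
            have hkey : Cf * 2 ^ d ≤ C * δ₀ := by
              rw [hC, div_mul_cancel₀ _ hδ₀.ne', pow_succ]
              nlinarith [h2d, hCg0, hCf0]
            calc r * (Cf * 2 ^ d) = (D / δ₀) * (Cf * 2 ^ d) := by rw [hr]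
              _ ≤ (D / δ₀) * (C * δ₀) :=
                  mul_le_mul_of_nonneg_left hkey (div_nonneg hD0 hδ₀.le)
              _ = C * D := by
                  field_simp
    · filter_upwards [ae_restrict_mem measurableSet_Ioo] with t ht
      by_cases ht2 : t ≤ r
      · have hmem : t ∈ Ioc (0:ℝ) r := ⟨ht.1, ht2⟩
        rw [indicator_of_mem hmem]
        have h1 := hinner1 x t ht
        have h2 : ((1 - t) ^ d)⁻¹ ≤ 2 ^ d := hpowb (1 - t) (by linarith)
        calc (∫ y in Ω, f ((1 - t)⁻¹ • (x - t • y)) * g y * ((1 - t) ^ d)⁻¹)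
            ≤ Cf * ((1 - t) ^ d)⁻¹ := h1
          _ ≤ Cf * 2 ^ d := mul_le_mul_of_nonneg_left h2 hCf0
      · have hmem : t ∉ Ioc (0:ℝ) r := fun h => ht2 h.2
        rw [indicator_of_notMem hmem]
        push_neg at ht2
        have hlt : D < t * δ₀ := by
          have := (div_lt_iff₀ hδ₀).mp (hr ▸ ht2 : D / δ₀ < t)
          linarith [this]
        have hz := hA x hx t ht hlt
        have hzero : (∫ y in Ω,
            f ((1 - t)⁻¹ • (x - t • y)) * g y * ((1 - t) ^ d)⁻¹) = 0 := by
          simp only [hz, integral_zero]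
        rw [hzero]
end

section
/- Let Ω ⊂ ℝ^d be open, bounded, convex with Lipschitz boundary, and f, g ∈ L^∞(Ω) probability densities with inf_Ω f > 0 and g vanishing near ∂Ω. Then there is C > 0 such that (1/C)·dist(x,∂Ω) ≤ σ(x) ≤ C·dist(x,∂Ω) for all x ∈ Ω, where σ is the interpolation density. -/
open MeasureTheory Set Metric

section aux

variable {d : ℕ}

private lemma aux_infDist_frontier_le_compl {s : Set (EuclideanSpace ℝ (Fin d))}
    (hne : s ≠ univ) {x : EuclideanSpace ℝ (Fin d)} (hx : x ∈ s) :
    infDist x (frontier s) ≤ infDist x sᶜ := by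
  obtain ⟨y, hy, hyd⟩ := exists_mem_frontier_infDist_compl_eq_dist hx hne
  rw [hyd]; exact infDist_le_dist_of_mem hy

private lemma aux_ball_subset {s : Set (EuclideanSpace ℝ (Fin d))}
    (hne : s ≠ univ) {x : EuclideanSpace ℝ (Fin d)} (hx : x ∈ s) :
    ball x (infDist x (frontier s)) ⊆ s := by
  intro w hw
  by_contra hws
  have h1 := aux_infDist_frontier_le_compl hne hx
  have h2 : infDist x sᶜ ≤ dist x w := infDist_le_dist_of_mem hws
  rw [mem_ball, dist_comm] at hw
  linarith

private lemma aux_frontier_subset_compl {s : Set (EuclideanSpace ℝ (Fin d))}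
    (hs : IsOpen s) : frontier s ⊆ sᶜ := by
  intro w hw
  rw [frontier, hs.interior_eq] at hw
  exact hw.2

/-- concavity-type estimate: if `x = (1-t)•z + t•y` with `z y ∈ Ω`, then
`infDist x ∂Ω ≥ t * infDist y ∂Ω`. -/
private lemma aux_comparison {Ω : Set (EuclideanSpace ℝ (Fin d))} (hΩo : IsOpen Ω)
    (hΩc : Convex ℝ Ω) (hF : (frontier Ω).Nonempty)
    {z y : EuclideanSpace ℝ (Fin d)} (hz : z ∈ Ω) (hy : y ∈ Ω)
    {t : ℝ} (ht0 : 0 < t) (ht1 : t ≤ 1) :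
    t * infDist y (frontier Ω) ≤ infDist ((1 - t) • z + t • y) (frontier Ω) := by
  set ρ := infDist y (frontier Ω) with hρ
  have hΩne : Ω ≠ univ := by
    rintro rfl; simp [frontier_univ] at hF
  have hball : ball y ρ ⊆ Ω := aux_ball_subset hΩne hy
  have hcne : (Ωᶜ).Nonempty := hF.mono (aux_frontier_subset_compl hΩo)
  set xx := (1 - t) • z + t • y with hxx
  have key : ∀ w ∈ Ωᶜ, t * ρ ≤ dist xx w := by
    intro w hw
    by_contra hlt
    push_neg at hlt
    have hu : y + t⁻¹ • (w - xx) ∈ ball y ρ := by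
      rw [mem_ball, dist_eq_norm]
      have he : y + t⁻¹ • (w - xx) - y = t⁻¹ • (w - xx) := by abel
      rw [he, norm_smul, norm_inv, Real.norm_eq_abs, abs_of_pos ht0]
      have hn : ‖w - xx‖ = dist xx w := by rw [dist_eq_norm, norm_sub_rev]
      rw [hn]
      rw [inv_mul_lt_iff₀ ht0]
      calc dist xx w < t * ρ := hlt
        _ = t * ρ := rfl
    have hwΩ : w ∈ Ω := by
      have hmem := hΩc hz (hball hu) (by linarith : (0:ℝ) ≤ 1 - t) ht0.le (by ring)
      have halg : (1 - t) • z + t • (y + t⁻¹ • (w - xx)) = w := by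
        rw [smul_add, smul_smul, mul_inv_cancel₀ ht0.ne', one_smul, hxx]
        abel
      rwa [halg] at hmem
    exact hw hwΩ
  have h1 : t * ρ ≤ infDist xx Ωᶜ := by
    by_contra hlt
    push_neg at hlt
    obtain ⟨w, hw, hwd⟩ := (infDist_lt_iff hcne).1 hlt
    exact absurd hwd (not_lt.2 (key w hw))
  have h2 : infDist xx Ωᶜ ≤ infDist xx (frontier Ω) :=
    infDist_le_infDist_of_subset (aux_frontier_subset_compl hΩo) hF
  linarith

end aux

set_option maxHeartbeats 2000000 in
theorem stmt_6 (d : ℕ) (Ω : Set (EuclideanSpace ℝ (Fin d)))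
    (hΩo : IsOpen Ω) (hΩb : Bornology.IsBounded Ω) (hΩc : Convex ℝ Ω)
    (f g : EuclideanSpace ℝ (Fin d) → ℝ) (Cf Cg : ℝ)
    (hfm : Measurable f) (hgm : Measurable g)
    (hf0 : ∀ x, 0 ≤ f x) (hg0 : ∀ x, 0 ≤ g x)
    (hfb : ∀ x, f x ≤ Cf) (hgb : ∀ x, g x ≤ Cg)
    (hfΩ : ∀ x, x ∉ Ω → f x = 0) (hgΩ : ∀ x, x ∉ Ω → g x = 0)
    (hf1 : ∫ x, f x = 1) (hg1 : ∫ x, g x = 1)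
    (hfinf : ∃ ε : ℝ, 0 < ε ∧ ∀ x ∈ Ω, ε ≤ f x)
    (hδ : ∃ δ₀ : ℝ, 0 < δ₀ ∧ ∀ z, infDist z (frontier Ω) ≤ δ₀ → g z = 0) :
    ∃ C : ℝ, 0 < C ∧
      ∀ x ∈ Ω,
        (1 / C) * infDist x (frontier Ω) ≤
            (∫ t in Ioo (0:ℝ) 1, ∫ y in Ω,
              f ((1 - t)⁻¹ • (x - t • y)) * g y * ((1 - t) ^ d)⁻¹) ∧
          (∫ t in Ioo (0:ℝ) 1, ∫ y in Ω,
              f ((1 - t)⁻¹ • (x - t • y)) * g y * ((1 - t) ^ d)⁻¹)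
            ≤ C * infDist x (frontier Ω) := by
  classical
  obtain ⟨ε, hε, hfε⟩ := hfinf
  obtain ⟨δ₀, hδ₀, hgδ⟩ := hδ
  have hgi : Integrable g := by
    by_contra h; rw [integral_undef h] at hg1; norm_num at hg1
  have hF : (frontier Ω).Nonempty := by
    by_contra h
    rw [not_nonempty_iff_eq_empty] at h
    have hz : ∀ z, g z = 0 := fun z => hgδ z (by rw [h, infDist_empty]; exact hδ₀.le)
    have h0 : ∫ x, g x = 0 := by simp [hz]
    rw [h0] at hg1; norm_num at hg1
  have hΩne : Ω ≠ univ := by rintro rfl; simp [frontier_univ] at hF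
  have hΩm : MeasurableSet Ω := hΩo.measurableSet
  have hvol : volume Ω < ⊤ := hΩb.measure_lt_top
  set volΩ := (volume Ω).toReal with hvolΩ
  have hvolΩ0 : 0 ≤ volΩ := ENNReal.toReal_nonneg
  have hCf : 0 ≤ Cf := le_trans (hf0 0) (hfb 0)
  have hCg : 0 ≤ Cg := le_trans (hg0 0) (hgb 0)
  set D := Metric.diam Ω with hDdef
  have hD0 : 0 ≤ D := Metric.diam_nonneg
  set M : ℝ := Cf * 2 ^ d + Cf * Cg * 2 ^ d * volΩ with hM
  have hM0 : 0 ≤ M := by positivity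
  set C : ℝ := max (M / δ₀) (2 * D / ε) + 1 with hC
  have hCmax0 : 0 ≤ max (M / δ₀) (2 * D / ε) :=
    le_max_of_le_left (div_nonneg hM0 hδ₀.le)
  have hC0 : 0 < C := by rw [hC]; linarith
  have hgΩ1 : ∫ y in Ω, g y = 1 := by
    rw [setIntegral_eq_integral_of_forall_compl_eq_zero (fun y hy => hgΩ y hy)]; exact hg1
  refine ⟨C, hC0, fun x hx => ?_⟩
  set r := infDist x (frontier Ω) with hr
  have hr0 : 0 < r := by
    rw [hr]
    refine (isClosed_frontier.notMem_iff_infDist_pos hF).1 ?_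
    intro hxf
    rw [frontier, hΩo.interior_eq] at hxf
    exact hxf.2 hx
  have hrD : r ≤ D := by
    obtain ⟨w, hw⟩ := hF
    calc r ≤ dist x w := infDist_le_dist_of_mem hw
      _ ≤ Metric.diam (closure Ω) :=
        Metric.dist_le_diam_of_mem hΩb.closure (subset_closure hx)
          (frontier_subset_closure hw)
      _ = D := by rw [hDdef, Metric.diam_closure]
  have hDpos : 0 < D := lt_of_lt_of_le hr0 hrD
  set I : ℝ → ℝ := fun t => ∫ y in Ω,
      f ((1 - t)⁻¹ • (x - t • y)) * g y * ((1 - t) ^ d)⁻¹ with hIdef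
  -- measurability of I
  have hφm : Measurable (fun p : ℝ × EuclideanSpace ℝ (Fin d) =>
      f ((1 - p.1)⁻¹ • (x - p.1 • p.2)) * g p.2 * ((1 - p.1) ^ d)⁻¹) := by
    refine Measurable.mul (Measurable.mul ?_ (hgm.comp measurable_snd)) ?_
    · exact hfm.comp (((measurable_const.sub measurable_fst).inv).smul
        (measurable_const.sub (measurable_fst.smul measurable_snd)))
    · exact ((measurable_const.sub measurable_fst).pow_const d).inv
  have hIsm : StronglyMeasurable I :=
    hφm.stronglyMeasurable.integral_prod_right' (ν := volume.restrict Ω)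
  -- per-t integrability of the inner integrand
  have hinti : ∀ t : ℝ, IntegrableOn
      (fun y => f ((1 - t)⁻¹ • (x - t • y)) * g y * ((1 - t) ^ d)⁻¹) Ω := by
    intro t
    have hm : Measurable (fun y : EuclideanSpace ℝ (Fin d) =>
        f ((1 - t)⁻¹ • (x - t • y)) * g y * ((1 - t) ^ d)⁻¹) := by
      refine Measurable.mul (Measurable.mul ?_ hgm) measurable_const
      exact hfm.comp ((measurable_const.sub (measurable_id.const_smul t)).const_smul (1 - t)⁻¹)
    refine Integrable.mono' (g := fun _ => Cf * Cg * |((1 - t) ^ d)⁻¹|)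
      (integrableOn_const hvol.ne)
      hm.aestronglyMeasurable (ae_of_all _ fun y => ?_)
    rw [Real.norm_eq_abs, abs_mul, abs_mul]
    have h1 : |f ((1 - t)⁻¹ • (x - t • y))| ≤ Cf := by
      rw [abs_of_nonneg (hf0 _)]; exact hfb _
    have h2 : |g y| ≤ Cg := by rw [abs_of_nonneg (hg0 _)]; exact hgb _
    have h3 : (0:ℝ) ≤ |((1 - t) ^ d)⁻¹| := abs_nonneg _
    show |f ((1 - t)⁻¹ • (x - t • y))| * |g y| * |((1 - t) ^ d)⁻¹| ≤
      Cf * Cg * |((1 - t) ^ d)⁻¹|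
    exact mul_le_mul_of_nonneg_right (mul_le_mul h1 h2 (abs_nonneg _) hCf) h3
  -- nonnegativity
  have hI0 : ∀ t ∈ Ioo (0:ℝ) 1, 0 ≤ I t := by
    intro t ht
    apply setIntegral_nonneg hΩm
    intro y _
    have h1t : (0:ℝ) < 1 - t := by linarith [ht.2]
    have : (0:ℝ) ≤ ((1 - t) ^ d)⁻¹ := by positivity
    exact mul_nonneg (mul_nonneg (hf0 _) (hg0 _)) this
  -- ((1-t)^d)⁻¹ ≤ 2^d for t ≤ 1/2
  have hc2 : ∀ t : ℝ, t ≤ 1/2 → t < 1 → ((1 - t) ^ d)⁻¹ ≤ 2 ^ d := by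
    intro t ht ht1
    have h1 : (2:ℝ)⁻¹ ≤ 1 - t := by linarith
    have h2 : ((2:ℝ)⁻¹) ^ d ≤ (1 - t) ^ d := pow_le_pow_left₀ (by norm_num) h1 d
    have h4 : (0:ℝ) < ((2:ℝ)⁻¹) ^ d := by positivity
    calc ((1 - t) ^ d)⁻¹ ≤ (((2:ℝ)⁻¹) ^ d)⁻¹ := by
          exact inv_anti₀ h4 h2
      _ = 2 ^ d := by rw [← inv_pow, inv_inv]
  -- bound A : I t ≤ Cf * ((1-t)^d)⁻¹
  have hIA : ∀ t ∈ Ioo (0:ℝ) 1, I t ≤ Cf * ((1 - t) ^ d)⁻¹ := by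
    intro t ht
    have h1t : (0:ℝ) < 1 - t := by linarith [ht.2]
    have hcpos : (0:ℝ) ≤ ((1 - t) ^ d)⁻¹ := by positivity
    have hle : I t ≤ ∫ y in Ω, (Cf * ((1 - t) ^ d)⁻¹) * g y := by
      rw [hIdef]
      apply setIntegral_mono_on (hinti t) ((hgi.integrableOn).const_mul _) hΩm
      intro y hy
      calc f ((1 - t)⁻¹ • (x - t • y)) * g y * ((1 - t) ^ d)⁻¹
          ≤ Cf * g y * ((1 - t) ^ d)⁻¹ :=
            mul_le_mul_of_nonneg_right
              (mul_le_mul_of_nonneg_right (hfb _) (hg0 y)) hcpos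
        _ = (Cf * ((1 - t) ^ d)⁻¹) * g y := by ring
    calc I t ≤ ∫ y in Ω, (Cf * ((1 - t) ^ d)⁻¹) * g y := hle
      _ = (Cf * ((1 - t) ^ d)⁻¹) * ∫ y in Ω, g y := integral_const_mul _ _
      _ = Cf * ((1 - t) ^ d)⁻¹ := by rw [hgΩ1, mul_one]
  -- measure of the preimage set
  have hSmeas : ∀ t ∈ Ioo (0:ℝ) 1,
      volume ((fun y : EuclideanSpace ℝ (Fin d) => (1 - t)⁻¹ • (x - t • y)) ⁻¹' Ω)
        = ENNReal.ofReal ((1 - t) ^ d * ((t:ℝ) ^ d)⁻¹) * volume Ω := by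
    intro t ht
    have ht0 := ht.1
    have h1t : (0:ℝ) < 1 - t := by linarith [ht.2]
    have hcomp : (fun y : EuclideanSpace ℝ (Fin d) => (1 - t)⁻¹ • (x - t • y))
        = ((fun v : EuclideanSpace ℝ (Fin d) => (1 - t)⁻¹ • v) ∘
            (fun v : EuclideanSpace ℝ (Fin d) => x - v)) ∘
          (fun y : EuclideanSpace ℝ (Fin d) => t • y) := rfl
    rw [hcomp, preimage_comp, preimage_comp]
    rw [Measure.addHaar_preimage_smul volume (ne_of_gt ht0)]
    have hneg : volume ((fun v : EuclideanSpace ℝ (Fin d) => x - v) ⁻¹'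
        ((fun v : EuclideanSpace ℝ (Fin d) => (1 - t)⁻¹ • v) ⁻¹' Ω))
        = volume ((fun v : EuclideanSpace ℝ (Fin d) => (1 - t)⁻¹ • v) ⁻¹' Ω) := by
      have h1 : (fun v : EuclideanSpace ℝ (Fin d) => x - v)
          = (fun u : EuclideanSpace ℝ (Fin d) => x + u) ∘ (fun v => -v) := by
        funext v; simp [sub_eq_add_neg]
      rw [h1, preimage_comp]
      simp [measure_preimage_add, Measure.measure_preimage_neg]
    rw [hneg, Measure.addHaar_preimage_smul volume (ne_of_gt (inv_pos.2 h1t)),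
      finrank_euclideanSpace_fin]
    rw [← mul_assoc, ← ENNReal.ofReal_mul (abs_nonneg _)]
    congr 1
    rw [inv_pow, inv_inv, abs_of_nonneg (by positivity : (0:ℝ) ≤ ((t:ℝ) ^ d)⁻¹),
      abs_of_nonneg (by positivity : (0:ℝ) ≤ (1 - t) ^ d)]
    ring
  -- bound B : for t ≥ 1/2
  have hIB : ∀ t ∈ Ioo (0:ℝ) 1, 1/2 ≤ t → I t ≤ Cf * Cg * 2 ^ d * volΩ := by
    intro t ht ht2
    have ht0 := ht.1
    have h1t : (0:ℝ) < 1 - t := by linarith [ht.2]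
    set S := (fun y : EuclideanSpace ℝ (Fin d) => (1 - t)⁻¹ • (x - t • y)) ⁻¹' Ω with hS
    have hSm : MeasurableSet S := by
      apply hΩm.preimage
      exact (measurable_const.sub (measurable_id.const_smul t)).const_smul (1 - t)⁻¹
    set K := Cf * Cg * ((1 - t) ^ d)⁻¹ with hK
    have hcpos : (0:ℝ) ≤ ((1 - t) ^ d)⁻¹ := by positivity
    have hK0 : 0 ≤ K := by positivity
    have hle : I t ≤ ∫ y in Ω, S.indicator (fun _ => K) y := by
      rw [hIdef]
      apply setIntegral_mono_on (hinti t)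
        ((integrableOn_const hvol.ne).indicator hSm) hΩm
      intro y hy
      by_cases hyS : y ∈ S
      · rw [indicator_of_mem hyS]
        calc f ((1 - t)⁻¹ • (x - t • y)) * g y * ((1 - t) ^ d)⁻¹
            ≤ (Cf * Cg) * ((1 - t) ^ d)⁻¹ :=
              mul_le_mul_of_nonneg_right
                (mul_le_mul (hfb _) (hgb _) (hg0 _) hCf) hcpos
          _ = K := by rw [hK]
      · rw [indicator_of_notMem hyS, hfΩ _ hyS, zero_mul, zero_mul]
    have hcalc : ∫ y in Ω, S.indicator (fun _ => K) y
        = K * (volume (Ω ∩ S)).toReal := by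
      rw [setIntegral_indicator hSm, setIntegral_const, smul_eq_mul, mul_comm]; rfl
    have hSvol : volume S = ENNReal.ofReal ((1 - t) ^ d * ((t:ℝ) ^ d)⁻¹) * volume Ω :=
      hSmeas t ht
    have hSfin : volume S < ⊤ := by
      rw [hSvol]
      exact ENNReal.mul_lt_top ENNReal.ofReal_lt_top hvol
    have h2 : (volume (Ω ∩ S)).toReal ≤ (1 - t) ^ d * ((t:ℝ) ^ d)⁻¹ * volΩ := by
      calc (volume (Ω ∩ S)).toReal ≤ (volume S).toReal :=
            ENNReal.toReal_mono hSfin.ne (measure_mono inter_subset_right)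
        _ = (1 - t) ^ d * ((t:ℝ) ^ d)⁻¹ * volΩ := by
            rw [hSvol, ENNReal.toReal_mul, ENNReal.toReal_ofReal (by positivity)]
    have htd : ((t:ℝ) ^ d)⁻¹ ≤ 2 ^ d := by
      have h1 : (2:ℝ)⁻¹ ≤ t := by linarith
      have h2' : ((2:ℝ)⁻¹) ^ d ≤ (t:ℝ) ^ d := pow_le_pow_left₀ (by norm_num) h1 d
      have h4 : (0:ℝ) < ((2:ℝ)⁻¹) ^ d := by positivity
      calc ((t:ℝ) ^ d)⁻¹ ≤ (((2:ℝ)⁻¹) ^ d)⁻¹ := inv_anti₀ h4 h2'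
        _ = 2 ^ d := by rw [← inv_pow, inv_inv]
    calc I t ≤ K * (volume (Ω ∩ S)).toReal := by rw [← hcalc]; exact hle
      _ ≤ K * ((1 - t) ^ d * ((t:ℝ) ^ d)⁻¹ * volΩ) :=
          mul_le_mul_of_nonneg_left h2 hK0
      _ = Cf * Cg * ((t:ℝ) ^ d)⁻¹ * volΩ := by
          rw [hK]; field_simp
      _ ≤ Cf * Cg * 2 ^ d * volΩ := by
          apply mul_le_mul_of_nonneg_right _ hvolΩ0
          exact mul_le_mul_of_nonneg_left htd (by positivity)
  -- global bound
  have hIM : ∀ t ∈ Ioo (0:ℝ) 1, I t ≤ M := by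
    intro t ht
    have hterm2 : (0:ℝ) ≤ Cf * Cg * 2 ^ d * volΩ := by positivity
    have hterm1 : (0:ℝ) ≤ Cf * 2 ^ d := by positivity
    rcases le_or_gt t (1/2) with h | h
    · have := (hIA t ht).trans (mul_le_mul_of_nonneg_left (hc2 t h ht.2) hCf)
      rw [hM]; linarith
    · have := hIB t ht h.le
      rw [hM]; linarith
  -- vanishing for t > r / δ₀
  have hIz : ∀ t ∈ Ioo (0:ℝ) 1, r / δ₀ < t → I t = 0 := by
    intro t ht htr
    have h1t : (0:ℝ) < 1 - t := by linarith [ht.2]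
    have hzero : ∀ y : EuclideanSpace ℝ (Fin d),
        f ((1 - t)⁻¹ • (x - t • y)) * g y * ((1 - t) ^ d)⁻¹ = 0 := by
      intro y
      by_cases hgy : g y = 0
      · rw [hgy, mul_zero, zero_mul]
      · have hyΩ : y ∈ Ω := by by_contra hy; exact hgy (hgΩ y hy)
        have hρ : δ₀ < infDist y (frontier Ω) := by
          by_contra hle; push_neg at hle; exact hgy (hgδ y hle)
        by_cases hzΩ : (1 - t)⁻¹ • (x - t • y) ∈ Ω
        · exfalso
          have hxeq : x = (1 - t) • ((1 - t)⁻¹ • (x - t • y)) + t • y := by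
            rw [smul_smul, mul_inv_cancel₀ h1t.ne', one_smul]; abel
          have hcmp := aux_comparison hΩo hΩc hF hzΩ hyΩ ht.1 ht.2.le
          rw [← hxeq, ← hr] at hcmp
          have h1 : t * δ₀ < t * infDist y (frontier Ω) :=
            mul_lt_mul_of_pos_left hρ ht.1
          have h2 : r < t * δ₀ := by
            rw [div_lt_iff₀ hδ₀] at htr; linarith
          linarith
        · rw [hfΩ _ hzΩ, zero_mul, zero_mul]
    rw [hIdef]
    calc (∫ y in Ω, f ((1 - t)⁻¹ • (x - t • y)) * g y * ((1 - t) ^ d)⁻¹)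
        = ∫ y in Ω, (0:ℝ) := setIntegral_congr_fun hΩm fun y _ => hzero y
      _ = 0 := by simp
  -- lower bound on I for small t
  have hT1 : r / (r + D) < 1 := by
    rw [div_lt_one (by linarith)]; linarith
  have hT0 : 0 < r / (r + D) := div_pos hr0 (by linarith)
  have hIε : ∀ t ∈ Ioo (0:ℝ) (r / (r + D)), ε ≤ I t := by
    intro t ht
    have ht0 := ht.1
    have htT := ht.2
    have ht1 : t < 1 := lt_trans htT hT1
    have h1t : (0:ℝ) < 1 - t := by linarith
    have hband : ∀ y ∈ Ω,
        ε * g y ≤ f ((1 - t)⁻¹ • (x - t • y)) * g y * ((1 - t) ^ d)⁻¹ := by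
      intro y hy
      by_cases hgy : g y = 0
      · rw [hgy, mul_zero, mul_zero, zero_mul]
      · have hzΩ : (1 - t)⁻¹ • (x - t • y) ∈ Ω := by
          apply aux_ball_subset hΩne hx
          rw [← hr, mem_ball, dist_eq_norm]
          have hzx : (1 - t)⁻¹ • (x - t • y) - x = (t / (1 - t)) • (x - y) := by
            have h : (1:ℝ) - t ≠ 0 := h1t.ne'
            match_scalars <;> field_simp <;> ring
          rw [hzx, norm_smul, Real.norm_eq_abs, abs_of_nonneg (by positivity : (0:ℝ) ≤ t / (1 - t))]
          have hxy : ‖x - y‖ ≤ D := by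
            rw [← dist_eq_norm, hDdef]
            exact Metric.dist_le_diam_of_mem hΩb hx hy
          have hstep : t / (1 - t) * D < r := by
            rw [div_mul_eq_mul_div, div_lt_iff₀ h1t]
            have htrD : t * (r + D) < r := by
              rw [lt_div_iff₀ (by linarith : (0:ℝ) < r + D)] at htT
              exact htT
            nlinarith
          calc t / (1 - t) * ‖x - y‖ ≤ t / (1 - t) * D :=
                mul_le_mul_of_nonneg_left hxy (by positivity)
            _ < r := hstep
        have hfz : ε ≤ f ((1 - t)⁻¹ • (x - t • y)) := hfε _ hzΩ
        have hc1 : (1:ℝ) ≤ ((1 - t) ^ d)⁻¹ := by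
          have h3 : (1 - t) ^ d ≤ 1 := pow_le_one₀ h1t.le (by linarith)
          have h4 : (0:ℝ) < (1 - t) ^ d := by positivity
          rw [le_inv_comm₀ one_pos h4, inv_one]
          exact h3
        calc ε * g y ≤ f ((1 - t)⁻¹ • (x - t • y)) * g y :=
              mul_le_mul_of_nonneg_right hfz (hg0 y)
          _ = f ((1 - t)⁻¹ • (x - t • y)) * g y * 1 := (mul_one _).symm
          _ ≤ f ((1 - t)⁻¹ • (x - t • y)) * g y * ((1 - t) ^ d)⁻¹ :=
              mul_le_mul_of_nonneg_left hc1 (mul_nonneg (hf0 _) (hg0 y))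
    have hstep2 : (∫ y in Ω, ε * g y) ≤ I t := by
      rw [hIdef]
      exact setIntegral_mono_on ((hgi.integrableOn).const_mul ε) (hinti t) hΩm hband
    calc ε = ε * ∫ y in Ω, g y := by rw [hgΩ1, mul_one]
      _ = ∫ y in Ω, ε * g y := (integral_const_mul _ _).symm
      _ ≤ I t := hstep2
  -- integrability of I on (0,1)
  have hIoo1 : volume (Ioo (0:ℝ) 1) < ⊤ := by simp [Real.volume_Ioo]
  have hIint : IntegrableOn I (Ioo (0:ℝ) 1) := by
    refine Integrable.mono' (g := fun _ => M) (integrableOn_const hIoo1.ne)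
      hIsm.aestronglyMeasurable.restrict ?_
    rw [ae_restrict_iff' measurableSet_Ioo]
    refine ae_of_all _ fun t ht => ?_
    rw [Real.norm_eq_abs, abs_of_nonneg (hI0 t ht)]
    exact hIM t ht
  -- upper bound
  have hupper : (∫ t in Ioo (0:ℝ) 1, I t) ≤ C * r := by
    have hstep : (∫ t in Ioo (0:ℝ) 1, I t)
        ≤ ∫ t in Ioo (0:ℝ) 1, (Iic (r/δ₀)).indicator (fun _ => M) t := by
      apply setIntegral_mono_on hIint
        ((integrableOn_const hIoo1.ne).indicator measurableSet_Iic)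
        measurableSet_Ioo
      intro t ht
      simp only [Set.indicator_apply, mem_Iic]
      by_cases htr : t ≤ r/δ₀
      · rw [if_pos htr]; exact hIM t ht
      · rw [if_neg htr]
        push_neg at htr
        rw [hIz t ht htr]
    have hval : (∫ t in Ioo (0:ℝ) 1, (Iic (r/δ₀)).indicator (fun _ => M) t)
        = M * (volume (Ioo (0:ℝ) 1 ∩ Iic (r/δ₀))).toReal := by
      rw [setIntegral_indicator measurableSet_Iic, setIntegral_const, smul_eq_mul, mul_comm]; rfl
    have hvol2 : (volume (Ioo (0:ℝ) 1 ∩ Iic (r/δ₀))).toReal ≤ r/δ₀ := by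
      have hsub : Ioo (0:ℝ) 1 ∩ Iic (r/δ₀) ⊆ Ioc 0 (r/δ₀) :=
        fun t ht => ⟨ht.1.1, ht.2⟩
      calc (volume (Ioo (0:ℝ) 1 ∩ Iic (r/δ₀))).toReal
          ≤ (volume (Ioc (0:ℝ) (r/δ₀))).toReal := by
            apply ENNReal.toReal_mono (by simp [Real.volume_Ioc])
            exact measure_mono hsub
        _ ≤ r/δ₀ := by
            rw [Real.volume_Ioc, sub_zero,
              ENNReal.toReal_ofReal (div_nonneg hr0.le hδ₀.le)]
    have hCM : M / δ₀ ≤ C := by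
      rw [hC]; exact le_trans (le_max_left _ _) (by linarith)
    calc (∫ t in Ioo (0:ℝ) 1, I t)
        ≤ M * (volume (Ioo (0:ℝ) 1 ∩ Iic (r/δ₀))).toReal := hstep.trans hval.le
      _ ≤ M * (r/δ₀) := mul_le_mul_of_nonneg_left hvol2 hM0
      _ = (M/δ₀) * r := by ring
      _ ≤ C * r := mul_le_mul_of_nonneg_right hCM hr0.le
  -- lower bound
  have hlower : (1/C) * r ≤ ∫ t in Ioo (0:ℝ) 1, I t := by
    have hsub : Ioo (0:ℝ) (r / (r + D)) ⊆ Ioo (0:ℝ) 1 := Ioo_subset_Ioo le_rfl hT1.le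
    have h1 : (∫ t in Ioo (0:ℝ) (r / (r + D)), (ε:ℝ))
        ≤ ∫ t in Ioo (0:ℝ) (r / (r + D)), I t := by
      apply setIntegral_mono_on
        (integrableOn_const (by simp [Real.volume_Ioo]))
        (hIint.mono_set hsub) measurableSet_Ioo
      intro t ht
      exact hIε t ht
    have h2 : (∫ t in Ioo (0:ℝ) (r / (r + D)), I t) ≤ ∫ t in Ioo (0:ℝ) 1, I t := by
      apply setIntegral_mono_set hIint
      · rw [Filter.EventuallyLE, ae_restrict_iff' measurableSet_Ioo]
        exact ae_of_all _ fun t ht => hI0 t ht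
      · exact HasSubset.Subset.eventuallyLE hsub
    have h3 : (∫ t in Ioo (0:ℝ) (r / (r + D)), (ε:ℝ)) = (r / (r + D)) * ε := by
      rw [setIntegral_const, smul_eq_mul, measureReal_def, Real.volume_Ioo, sub_zero,
        ENNReal.toReal_ofReal hT0.le]
    have h4 : (1/C) * r ≤ (r / (r + D)) * ε := by
      have hC2 : 2*D/ε ≤ C := by
        rw [hC]; exact le_trans (le_max_right _ _) (by linarith)
      have hCrD : (r + D)/ε ≤ C := by
        refine le_trans ?_ hC2
        exact (div_le_div_iff_of_pos_right hε).2 (by linarith)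
      have h7 : 1/C ≤ ε/(r + D) := by
        rw [div_le_div_iff₀ hC0 (by linarith : (0:ℝ) < r + D)]
        have h8 := mul_le_mul_of_nonneg_left hCrD hε.le
        have h9 : ε * ((r + D)/ε) = r + D := by field_simp
        calc 1 * (r + D) = ε * ((r + D)/ε) := by rw [h9]; ring
          _ ≤ ε * C := h8
      calc (1/C) * r ≤ (ε/(r + D)) * r := mul_le_mul_of_nonneg_right h7 hr0.le
        _ = (r / (r + D)) * ε := by ring
    linarith
  exact ⟨hlower, hupper⟩
end

section
/- Let σ(x) > 0, λ > 0, and ξ* ∈ ℝ^d. Define φ(ξ) = ξ*·ξ + (λσ(x)/2)(|ξ|−1)₊² + |ξ*|²/(2λσ(x)) + |ξ*|. Then for all ξ ∈ ℝ^d, φ(ξ) ≥ (1/(2λσ(x))) |ξ* + λσ(x)(|ξ|−1)₊ · ξ/|ξ| |², where (|ξ|−1)₊ ξ/|ξ| is interpreted as 0 when ξ = 0. -/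
/-- for `σ(x) = s > 0`, `λ > 0` and `ξ* ∈ ℝ^d`, the function
`φ(ξ) = ξ*·ξ + (λs/2)(|ξ|−1)₊² + |ξ*|²/(2λs) + |ξ*|` satisfies
`φ(ξ) ≥ (1/(2λs)) |ξ* + λs(|ξ|−1)₊ ξ/|ξ||²` for all `ξ`, with the convention that
`(|ξ|−1)₊ ξ/|ξ| = 0` when `ξ = 0` (automatic here since `‖0‖⁻¹ = 0⁻¹` smul gives `0`). -/
theorem stmt_11 (d : ℕ) (lam s : ℝ) (hlam : 0 < lam) (hs : 0 < s)
    (ξstar : EuclideanSpace ℝ (Fin d)) (ξ : EuclideanSpace ℝ (Fin d)) :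
    (1 / (2 * lam * s)) *
        ‖ξstar + (lam * s * (max (‖ξ‖ - 1) 0) / ‖ξ‖) • ξ‖ ^ 2
      ≤ (inner ℝ ξstar ξ : ℝ) + (lam * s / 2) * (max (‖ξ‖ - 1) 0) ^ 2
          + ‖ξstar‖ ^ 2 / (2 * lam * s) + ‖ξstar‖ := by
  have hc0 : 0 < lam * s := mul_pos hlam hs
  by_cases hx : ξ = 0
  · subst hx
    have h0 : max ((0:ℝ) - 1) 0 = 0 := by norm_num
    simp only [norm_zero, smul_zero, add_zero, inner_zero_right, h0]
    have hA : (0:ℝ) ≤ ‖ξstar‖ := norm_nonneg _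
    have : (1 / (2 * lam * s)) * ‖ξstar‖ ^ 2 = ‖ξstar‖ ^ 2 / (2 * lam * s) := by
      ring
    rw [this]
    nlinarith
  · have ht : 0 < ‖ξ‖ := norm_pos_iff.mpr hx
    set t := ‖ξ‖ with htdef
    set m := max (t - 1) 0 with hmdef
    set A := ‖ξstar‖ with hAdef
    set I : ℝ := inner ℝ ξstar ξ with hIdef
    have hA : 0 ≤ A := norm_nonneg _
    have hm0 : 0 ≤ m := le_max_right _ _
    have hmt : m ≤ t := max_le (by linarith) ht.le
    have htm : t - m ≤ 1 := by
      have := le_max_left (t - 1) 0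
      linarith
    have hI : -(A * t) ≤ I := by
      have h := abs_real_inner_le_norm ξstar ξ
      have := neg_abs_le I
      linarith [abs_real_inner_le_norm ξstar ξ, neg_abs_le I]
    have hnorm : ‖ξstar + (lam * s * m / t) • ξ‖ ^ 2
        = A ^ 2 + 2 * (lam * s * m / t) * I + (lam * s * m) ^ 2 := by
      rw [norm_add_sq_real, real_inner_smul_right, norm_smul]
      have h1 : ‖(lam * s * m / t : ℝ)‖ = lam * s * m / t := by
        rw [Real.norm_eq_abs]
        exact abs_of_nonneg (by positivity)
      rw [h1, ← hIdef, ← hAdef, ← htdef]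
      field_simp
    rw [hnorm]
    have key : m * I ≤ t * I + t * A := by
      nlinarith [mul_nonneg (sub_nonneg.2 hmt) (by linarith : (0:ℝ) ≤ I + A * t),
        mul_nonneg (mul_nonneg hA ht.le) (by linarith : (0:ℝ) ≤ 1 - (t - m))]
    have expand : (1 / (2 * lam * s)) *
        (A ^ 2 + 2 * (lam * s * m / t) * I + (lam * s * m) ^ 2)
        = A ^ 2 / (2 * lam * s) + (m * I) / t + lam * s * m ^ 2 / 2 := by
      field_simp
    rw [expand]
    have hdiv : (m * I) / t ≤ I + A := by
      rw [div_le_iff₀ ht]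
      nlinarith
    have : lam * s / 2 * m ^ 2 = lam * s * m ^ 2 / 2 := by ring
    linarith [hdiv]
end
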